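/- arXiv:1307.5642 — 3 statements merged into one kernel-verified Lean document; each statement's English description precedes it below -/
import Mathlib

section
/- Let n ≥ 1, let k ≥ 1 be an integer and let 1 < p < ∞. There is a constant c = c(n,p,k) such that for every weight w ∈ A_p and every f with ‖f‖_{L^p(w)} < ∞, ‖M^k f‖_{L^p(w)} ≤ c [w]_{A_p}^{k/(p−1)} ‖f‖_{L^p(w)}, where M^k denotes the k-fold composition of the Hardy–Littlewood maximal operator M. -/
open MeasureTheory Filter
open scoped ENNReal NNReal
open scoped Topology

/-- A (closed) cube in ℝⁿ with sides parallel to the coordinate axes. -/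
def IsCube (n : ℕ) (Q : Set (Fin n → ℝ)) : Prop :=
  ∃ (a : Fin n → ℝ) (h : ℝ), 0 < h ∧ Q = {y | ∀ i, y i ∈ Set.Icc (a i) (a i + h)}

/-- Average of an `ℝ≥0∞`-valued function over a set. -/
noncomputable def setAvg (n : ℕ) (Q : Set (Fin n → ℝ)) (g : (Fin n → ℝ) → ℝ≥0∞) : ℝ≥0∞ :=
  (volume Q)⁻¹ * ∫⁻ y in Q, g y

/-- The Muckenhoupt `A_p` constant of a weight `w`. -/
noncomputable def ApConst (n : ℕ) (p : ℝ) (w : (Fin n → ℝ) → ℝ≥0∞) : ℝ≥0∞ :=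
  ⨆ (Q : Set (Fin n → ℝ)) (_ : IsCube n Q),
    setAvg n Q w * (setAvg n Q fun y => w y ^ (1 - p / (p - 1))) ^ (p - 1)

/-- A weight: a measurable nonnegative (`ℝ≥0∞`-valued) locally integrable function. -/
def IsWeight (n : ℕ) (w : (Fin n → ℝ) → ℝ≥0∞) : Prop :=
  Measurable w ∧ ∀ Q : Set (Fin n → ℝ), IsCube n Q → (∫⁻ y in Q, w y) < ∞

/-- Weighted L^p norm of an `ℝ≥0∞`-valued function. -/
noncomputable def wLpNormE (n : ℕ) (p : ℝ) (w : (Fin n → ℝ) → ℝ≥0∞)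
    (g : (Fin n → ℝ) → ℝ≥0∞) : ℝ≥0∞ :=
  (∫⁻ x, g x ^ p * w x) ^ (1 / p)

/-- Weighted L^p norm of a real function. -/
noncomputable def wLpNorm (n : ℕ) (p : ℝ) (w : (Fin n → ℝ) → ℝ≥0∞)
    (f : (Fin n → ℝ) → ℝ) : ℝ≥0∞ :=
  wLpNormE n p w fun x => (‖f x‖₊ : ℝ≥0∞)

/-- Unweighted L^p norm of a real function on ℝⁿ. -/
noncomputable def lpNorm (n : ℕ) (p : ℝ) (f : (Fin n → ℝ) → ℝ) : ℝ≥0∞ :=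
  (∫⁻ x, (‖f x‖₊ : ℝ≥0∞) ^ p) ^ (1 / p)

/-- Unweighted L^p norm of an `ℝ≥0∞`-valued function on ℝⁿ. -/
noncomputable def lpNormE (n : ℕ) (p : ℝ) (g : (Fin n → ℝ) → ℝ≥0∞) : ℝ≥0∞ :=
  (∫⁻ x, g x ^ p) ^ (1 / p)

/-- Operator norm on unweighted `L^p(ℝⁿ)`: the least `C ∈ [0,∞]` with
`‖Tf‖_p ≤ C ‖f‖_p` for all `f ∈ L^p`. -/
noncomputable def opNorm (n : ℕ) (p : ℝ)
    (T : ((Fin n → ℝ) → ℝ) → (Fin n → ℝ) → ℝ) : ℝ≥0∞ :=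
  sInf {C : ℝ≥0∞ | ∀ f : (Fin n → ℝ) → ℝ, Measurable f → lpNorm n p f < ∞ →
    lpNorm n p (T f) ≤ C * lpNorm n p f}

/-- The Hardy–Littlewood maximal operator (over cubes with sides parallel to the axes). -/
noncomputable def HLM (n : ℕ) (g : (Fin n → ℝ) → ℝ≥0∞) : (Fin n → ℝ) → ℝ≥0∞ :=
  fun x => ⨆ (Q : Set (Fin n → ℝ)) (_ : IsCube n Q) (_ : x ∈ Q), setAvg n Q g

/-- The operator norm of the Hardy–Littlewood maximal operator on `L^p(ℝⁿ)`. -/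
noncomputable def maximalOpNorm (n : ℕ) (p : ℝ) : ℝ≥0∞ :=
  sInf {C : ℝ≥0∞ | ∀ f : (Fin n → ℝ) → ℝ, Measurable f → lpNorm n p f < ∞ →
    lpNormE n p (HLM n fun y => (‖f y‖₊ : ℝ≥0∞)) ≤ C * lpNorm n p f}

noncomputable section Dyadic1

def dL (t k m : ℤ) : ℝ := 2^k * (m + (-1:ℝ)^k * t/3)

def dI (t k m : ℤ) : Set ℝ := Set.Ico (dL t k m) (dL t k m + 2^k)

lemma two_zpow_pos (k : ℤ) : (0:ℝ) < 2^k := zpow_pos (by norm_num) k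

lemma mem_dI_iff {t k m : ℤ} {x : ℝ} :
    x ∈ dI t k m ↔ (m:ℝ) ≤ x/2^k - (-1:ℝ)^k * t/3 ∧ x/2^k - (-1:ℝ)^k * t/3 < m + 1 := by
  have h2 := two_zpow_pos k
  simp only [dI, dL, Set.mem_Ico]
  constructor
  · rintro ⟨h1, h2'⟩
    constructor
    · rw [le_sub_iff_add_le, le_div_iff₀ h2]; nlinarith
    · rw [sub_lt_iff_lt_add, div_lt_iff₀ h2]; nlinarith
  · rintro ⟨h1, h2'⟩
    rw [le_sub_iff_add_le, le_div_iff₀ h2] at h1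
    rw [sub_lt_iff_lt_add, div_lt_iff₀ h2] at h2'
    constructor <;> nlinarith

lemma mem_dI_iff_floor {t k m : ℤ} {x : ℝ} :
    x ∈ dI t k m ↔ ⌊x/2^k - (-1:ℝ)^k * t/3⌋ = m := by
  rw [mem_dI_iff, Int.floor_eq_iff]

lemma dI_exists_mem (t k : ℤ) (x : ℝ) : x ∈ dI t k ⌊x/2^k - (-1:ℝ)^k * t/3⌋ :=
  mem_dI_iff_floor.2 rfl

lemma dI_disjoint_same {t k m m' : ℤ} (h : m ≠ m') : Disjoint (dI t k m) (dI t k m') := by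
  rw [Set.disjoint_left]
  intro x hx hx'
  rw [mem_dI_iff_floor] at hx hx'
  exact h (hx ▸ hx')

lemma neg_one_zpow_cases (k : ℤ) : ∃ s : ℤ, (s = 1 ∨ s = -1) ∧ ((-1:ℝ))^k = s := by
  rcases Int.even_or_odd k with hev | hodd
  · exact ⟨1, Or.inl rfl, by rw [Even.neg_one_zpow hev]; norm_num⟩
  · exact ⟨-1, Or.inr rfl, by rw [Odd.neg_one_zpow hodd]; norm_num⟩

lemma dI_parent (t k m : ℤ) : ∃ m', dI t k m ⊆ dI t (k+1) m' := by
  obtain ⟨s, hs, hsgn⟩ := neg_one_zpow_cases k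
  set N : ℤ := m - 1 + s * t with hN
  refine ⟨(N+1)/2, ?_⟩
  have hpow : ((-1:ℝ))^(k+1) = -((-1:ℝ)^k) := by
    rw [zpow_add₀ (by norm_num : (-1:ℝ) ≠ 0)]; ring
  have h2 := two_zpow_pos k
  have h2' : (2:ℝ)^(k+1) = 2 * 2^k := by
    rw [zpow_add₀ (by norm_num : (2:ℝ) ≠ 0)]; ring
  have hdiv : N ≤ 2 * ((N+1)/2) ∧ 2 * ((N+1)/2) ≤ N + 1 := by
    constructor
    · have := Int.emod_lt_of_pos (N+1) (by norm_num : (0:ℤ) < 2)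
      have h := Int.mul_ediv_add_emod (N+1) 2
      omega
    · have := Int.emod_nonneg (N+1) (by norm_num : (2:ℤ) ≠ 0)
      have h := Int.mul_ediv_add_emod (N+1) 2
      omega
  intro x hx
  simp only [dI, dL, Set.mem_Ico] at hx ⊢
  obtain ⟨hx1, hx2⟩ := hx
  rw [h2', hpow, hsgn]
  rw [hsgn] at hx1 hx2
  have hNr : ((N:ℝ)) = (m:ℝ) - 1 + (s:ℝ) * t := by rw [hN]; push_cast; ring
  obtain ⟨hd1, hd2⟩ := hdiv
  have hd1' : (N:ℝ) ≤ 2 * (((N+1)/2 : ℤ):ℝ) := by exact_mod_cast hd1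
  have hd2' : 2 * (((N+1)/2 : ℤ):ℝ) ≤ (N:ℝ) + 1 := by exact_mod_cast hd2
  constructor
  · nlinarith
  · nlinarith

lemma dI_nested {t : ℤ} : ∀ (d : ℕ) (k m m' : ℤ),
    dI t k m ⊆ dI t (k + d) m' ∨ Disjoint (dI t k m) (dI t (k + d) m') := by
  intro d
  induction d with
  | zero => intro k m m'
            rcases eq_or_ne m m' with rfl | h
            · left; simp
            · right; simpa using dI_disjoint_same h
  | succ d ih =>
    intro k m m'
    obtain ⟨mp, hmp⟩ := dI_parent t k m
    have heq : (k + 1) + (d:ℤ) = k + (d+1 : ℕ) := by push_cast; ring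
    rcases ih (k+1) mp m' with hsub | hdis
    · rw [heq] at hsub
      left; exact hmp.trans hsub
    · rw [heq] at hdis
      right; exact Disjoint.mono_left hmp hdis

lemma dI_nested' {t k l m m' : ℤ} (hkl : k ≤ l) :
    dI t k m ⊆ dI t l m' ∨ Disjoint (dI t k m) (dI t l m') := by
  obtain ⟨d, rfl⟩ : ∃ d : ℕ, l = k + d := ⟨(l - k).toNat, by omega⟩
  exact dI_nested d k m m'

lemma dI_scale {h : ℝ} (hh : 0 < h) : ∃ k : ℤ, 3*h ≤ 2^k ∧ (2:ℝ)^k ≤ 6*h := by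
  obtain ⟨k, hk⟩ := exists_mem_Ioc_zpow (x := 3*h) (y := (2:ℝ)) (by linarith) (by norm_num)
  refine ⟨k+1, hk.2, ?_⟩
  rw [zpow_add₀ (by norm_num : (2:ℝ) ≠ 0)]
  have := hk.1
  nlinarith [two_zpow_pos k]

lemma dI_cover {h : ℝ} (hh : 0 < h) {k : ℤ} (hk : 3*h ≤ 2^k) (a : ℝ) :
    ∃ t m : ℤ, 0 ≤ t ∧ t < 3 ∧ Set.Icc a (a+h) ⊆ dI t k m := by
  have h2 := two_zpow_pos k
  set j : ℤ := ⌊3*a/2^k⌋ with hj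
  have key : ∃ t m : ℤ, 0 ≤ t ∧ t < 3 ∧ dL t k m = j * (2^k/3) := by
    obtain ⟨s, hs, hsgn⟩ := neg_one_zpow_cases k
    rcases hs with rfl | rfl
    · refine ⟨j % 3, j / 3, Int.emod_nonneg j (by norm_num), Int.emod_lt_of_pos j (by norm_num), ?_⟩
      have hje := Int.mul_ediv_add_emod j 3
      rw [dL, hsgn]
      have hc : (3:ℝ) * ((j/3 : ℤ):ℝ) + ((j % 3 : ℤ):ℝ) = (j:ℝ) := by exact_mod_cast hje
      push_cast
      field_simp
      nlinarith [hc]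
    · refine ⟨(-j) % 3, (j + (-j) % 3)/3, Int.emod_nonneg _ (by norm_num), Int.emod_lt_of_pos _ (by norm_num), ?_⟩
      have hdvd : (3:ℤ) ∣ (j + (-j) % 3) := by
        have h3 := Int.emod_nonneg (-j) (by norm_num : (3:ℤ) ≠ 0)
        have h4 := Int.mul_ediv_add_emod (-j) 3
        omega
      have hje : 3 * ((j + (-j) % 3)/3) = j + (-j) % 3 := Int.mul_ediv_cancel' hdvd
      rw [dL, hsgn]
      have hc : (3:ℝ) * (((j + (-j) % 3)/3 : ℤ):ℝ) = ((j:ℝ) + (((-j) % 3 : ℤ):ℝ)) := by exact_mod_cast hje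
      push_cast
      field_simp
      nlinarith [hc]
  obtain ⟨t, m, ht0, ht3, hL⟩ := key
  refine ⟨t, m, ht0, ht3, ?_⟩
  have h1 : (j:ℝ) * 2^k ≤ 3*a := by
    have := Int.floor_le (3*a/2^k)
    rw [← hj] at this
    calc (j:ℝ) * 2^k ≤ (3*a/2^k) * 2^k := by nlinarith
    _ = 3*a := by field_simp
  have h1' : 3*a < ((j:ℝ)+1) * 2^k := by
    have := Int.lt_floor_add_one (3*a/2^k)
    rw [← hj] at this
    calc 3*a = (3*a/2^k) * 2^k := by field_simp
    _ < ((j:ℝ)+1) * 2^k := by nlinarith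
  intro x hx
  simp only [Set.mem_Icc] at hx
  simp only [dI, Set.mem_Ico, hL]
  constructor
  · nlinarith [hx.1]
  · nlinarith [hx.2]

end Dyadic1

noncomputable section DyadicN
variable {n : ℕ}

/-- A dyadic cube in grid `t` -/
def dC (t : Fin n → ℤ) (k : ℤ) (m : Fin n → ℤ) : Set (Fin n → ℝ) :=
  Set.univ.pi (fun i => dI (t i) k (m i))

lemma measurableSet_dI (t k m : ℤ) : MeasurableSet (dI t k m) := measurableSet_Ico

lemma measurableSet_dC (t : Fin n → ℤ) (k : ℤ) (m : Fin n → ℤ) : MeasurableSet (dC t k m) :=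
  MeasurableSet.univ_pi (fun i => measurableSet_dI _ _ _)

lemma volume_dC (t : Fin n → ℤ) (k : ℤ) (m : Fin n → ℤ) :
    volume (dC t k m) = (ENNReal.ofReal ((2:ℝ)^k))^n := by
  rw [dC, volume_pi_pi]
  simp [dI, Real.volume_Ico]

lemma volume_dC_pos (t : Fin n → ℤ) (k : ℤ) (m : Fin n → ℤ) : 0 < volume (dC t k m) := by
  rw [volume_dC]
  exact ENNReal.pow_pos (by simp [ENNReal.ofReal_pos, two_zpow_pos k]) n

lemma volume_dC_lt_top (t : Fin n → ℤ) (k : ℤ) (m : Fin n → ℤ) : volume (dC t k m) < ∞ := by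
  rw [volume_dC]
  exact ENNReal.pow_lt_top ENNReal.ofReal_lt_top

/-- index of the cube of scale k in grid t containing x -/
def mOf (t : Fin n → ℤ) (k : ℤ) (x : Fin n → ℝ) : Fin n → ℤ :=
  fun i => ⌊x i/2^k - (-1:ℝ)^k * (t i)/3⌋

lemma mem_dC_mOf (t : Fin n → ℤ) (k : ℤ) (x : Fin n → ℝ) : x ∈ dC t k (mOf t k x) :=
  fun i _ => dI_exists_mem (t i) k (x i)

lemma mem_dC_iff_mOf {t : Fin n → ℤ} {k : ℤ} {m : Fin n → ℤ} {x : Fin n → ℝ} :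
    x ∈ dC t k m ↔ mOf t k x = m := by
  constructor
  · intro hx
    funext i
    exact mem_dI_iff_floor.1 (hx i (Set.mem_univ i))
  · rintro rfl
    exact mem_dC_mOf t k x

lemma dC_nested {t : Fin n → ℤ} {k l : ℤ} {m m' : Fin n → ℤ} (hkl : k ≤ l) :
    dC t k m ⊆ dC t l m' ∨ Disjoint (dC t k m) (dC t l m') := by
  by_cases hall : ∀ i, dI (t i) k (m i) ⊆ dI (t i) l (m' i)
  · left
    exact Set.pi_mono (fun i _ => hall i)
  · right
    push_neg at hall
    obtain ⟨i, hi⟩ := hall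
    have := dI_nested' (t := t i) (m := m i) (m' := m' i) hkl
    rcases this with hsub | hdis
    · exact absurd hsub hi
    · rw [Set.disjoint_left]
      intro x hx hx'
      exact Set.disjoint_left.1 hdis (hx i (Set.mem_univ i)) (hx' i (Set.mem_univ i))

/-- every closed axis cube is inside a grid cube of comparable size, with grid index in [0,3)ⁿ -/
lemma dC_cover {a : Fin n → ℝ} {h : ℝ} (hh : 0 < h) :
    ∃ (t : Fin n → ℤ) (k : ℤ) (m : Fin n → ℤ), (∀ i, 0 ≤ t i ∧ t i < 3) ∧
      {y | ∀ i, y i ∈ Set.Icc (a i) (a i + h)} ⊆ dC t k m ∧ (2:ℝ)^k ≤ 6*h := by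
  obtain ⟨k, hk1, hk2⟩ := dI_scale hh
  have : ∀ i : Fin n, ∃ tm : ℤ × ℤ, 0 ≤ tm.1 ∧ tm.1 < 3 ∧ Set.Icc (a i) (a i + h) ⊆ dI tm.1 k tm.2 := by
    intro i
    obtain ⟨t, m, h1, h2, h3⟩ := dI_cover hh hk1 (a i)
    exact ⟨⟨t, m⟩, h1, h2, h3⟩
  choose tm htm using this
  refine ⟨fun i => (tm i).1, k, fun i => (tm i).2, fun i => ⟨(htm i).1, (htm i).2.1⟩, ?_, hk2⟩
  intro y hy i _
  exact (htm i).2.2 (hy i)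

end DyadicN

noncomputable section DyMax
variable {n : ℕ}
local notation "α" => (Fin n → ℝ)

/-- μ-average over a set -/
def dAvg (μ : Measure α) (P : Set α) (F : α → ℝ≥0∞) : ℝ≥0∞ := (μ P)⁻¹ * ∫⁻ y in P, F y ∂μ

/-- dyadic maximal function for grid `t` and measure `μ` -/
def dyM (t : Fin n → ℤ) (μ : Measure α) (F : α → ℝ≥0∞) (x : α) : ℝ≥0∞ :=
  ⨆ (k : ℤ) (m : Fin n → ℤ) (_ : x ∈ dC t k m), dAvg μ (dC t k m) F

lemma dC_nonempty (t : Fin n → ℤ) (k : ℤ) (m : Fin n → ℤ) : (dC t k m).Nonempty := by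
  refine ⟨fun i => dL (t i) k (m i), fun i _ => ?_⟩
  simp only [dI, Set.mem_Ico]
  exact ⟨le_refl _, by linarith [two_zpow_pos k]⟩

lemma measurable_dyM (t : Fin n → ℤ) (μ : Measure α) (F : α → ℝ≥0∞) :
    Measurable (dyM t μ F) := by
  apply Measurable.iSup; intro k
  apply Measurable.iSup; intro m
  have : (fun x => ⨆ (_ : x ∈ dC t k m), dAvg μ (dC t k m) F)
      = (dC t k m).indicator (fun _ => dAvg μ (dC t k m) F) := by
    ext x; by_cases h : x ∈ dC t k m <;> simp [h]
  rw [this]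
  exact measurable_const.indicator (measurableSet_dC t k m)

lemma dAvg_le_dyM (t : Fin n → ℤ) (μ : Measure α) (F : α → ℝ≥0∞) {k : ℤ} {m : Fin n → ℤ}
    {x : α} (hx : x ∈ dC t k m) : dAvg μ (dC t k m) F ≤ dyM t μ F x := by
  refine le_trans ?_ (le_iSup _ k)
  refine le_trans ?_ (le_iSup _ m)
  exact le_iSup_iff.mpr fun b hb => hb hx

lemma dyM_mono_fun (t : Fin n → ℤ) (μ : Measure α) {F G : α → ℝ≥0∞} (h : ∀ y, F y ≤ G y)
    (x : α) : dyM t μ F x ≤ dyM t μ G x := by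
  apply iSup_le; intro k; apply iSup_le; intro m; apply iSup_le; intro hx
  refine le_trans ?_ (dAvg_le_dyM t μ G hx)
  exact mul_le_mul_right (lintegral_mono fun y => h y) _

/-- cube-level Chebyshev -/
lemma cube_cheby {μ : Measure α} {P : Set α} {F : α → ℝ≥0∞} {l : ℝ≥0∞}
    (hl0 : l ≠ 0) (hlt : l ≠ ∞) (hI : ∫⁻ y in P, F y ∂μ ≠ ∞)
    (h : l < dAvg μ P F) : μ P ≤ l⁻¹ * ∫⁻ y in P, F y ∂μ := by
  set A := μ P with hA
  set I := ∫⁻ y in P, F y ∂μ with hI'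
  rcases eq_or_ne A 0 with h0 | h0
  · simp [h0]
  rcases eq_or_ne A ∞ with htop | htop
  · exfalso
    rw [dAvg, ← hA, htop] at h
    simp at h
  have h1 : l * A ≤ I := by
    calc l * A ≤ (A⁻¹ * I) * A := mul_le_mul_left h.le A
    _ = I * (A⁻¹ * A) := by ring
    _ = I := by rw [ENNReal.inv_mul_cancel h0 htop, mul_one]
  calc A = (l⁻¹ * l) * A := by rw [ENNReal.inv_mul_cancel hl0 hlt, one_mul]
  _ = l⁻¹ * (l * A) := by ring
  _ ≤ l⁻¹ * I := mul_le_mul_right h1 _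

theorem dyM_weak (hn : 1 ≤ n) (t : Fin n → ℤ) (μ : Measure α) (F : α → ℝ≥0∞)
    {l : ℝ≥0∞} (hl0 : l ≠ 0) (hlt : l ≠ ∞) :
    μ {x | l < dyM t μ F x} ≤ l⁻¹ * ∫⁻ y, F y ∂μ := by
  by_cases hI : ∫⁻ y, F y ∂μ = ∞
  · rw [hI, ENNReal.mul_top (by simpa using hlt)]; exact le_top
  set 𝒞 : Set (ℤ × (Fin n → ℤ)) := {q | l < dAvg μ (dC t q.1 q.2) F} with h𝒞
  have hE : {x | l < dyM t μ F x} = ⋃ q ∈ 𝒞, dC t q.1 q.2 := by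
    ext x
    simp only [Set.mem_setOf_eq, dyM, lt_iSup_iff, Set.mem_iUnion, h𝒞]
    constructor
    · rintro ⟨k, m, hx, hlt'⟩; exact ⟨(k, m), hlt', hx⟩
    · rintro ⟨⟨k, m⟩, hlt', hx⟩; exact ⟨k, m, hx, hlt'⟩
  rw [hE]
  -- truncation by top scale K
  have key : ∀ K : ℤ, μ (⋃ q ∈ {q ∈ 𝒞 | q.1 ≤ K}, dC t q.1 q.2) ≤ l⁻¹ * ∫⁻ y, F y ∂μ := by
    intro K
    set 𝒞K := {q ∈ 𝒞 | q.1 ≤ K} with h𝒞K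
    -- maximal cubes
    set 𝒬 := {q ∈ 𝒞K | ∀ q' ∈ 𝒞K, dC t q.1 q.2 ⊆ dC t q'.1 q'.2 → dC t q'.1 q'.2 = dC t q.1 q.2} with h𝒬
    have hinj : ∀ q ∈ 𝒬, ∀ q' ∈ 𝒬, dC t q.1 q.2 = dC t q'.1 q'.2 → q = q' := by
      rintro ⟨k, m⟩ _ ⟨k', m'⟩ _ heq
      have hvol : volume (dC t k m) = volume (dC t k' m') := by rw [heq]
      rw [volume_dC, volume_dC] at hvol
      have hkk : k = k' := by
        by_contra hne
        rcases lt_or_gt_of_ne hne with hlt' | hlt'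
        · have : ENNReal.ofReal ((2:ℝ)^k) < ENNReal.ofReal ((2:ℝ)^k') :=
            (ENNReal.ofReal_lt_ofReal_iff (two_zpow_pos k')).2 (zpow_lt_zpow_right₀ (by norm_num) hlt')
          exact absurd hvol (ne_of_lt (ENNReal.pow_lt_pow_left (by omega) this))
        · have : ENNReal.ofReal ((2:ℝ)^k') < ENNReal.ofReal ((2:ℝ)^k) :=
            (ENNReal.ofReal_lt_ofReal_iff (two_zpow_pos k)).2 (zpow_lt_zpow_right₀ (by norm_num) hlt')
          exact absurd hvol.symm (ne_of_lt (ENNReal.pow_lt_pow_left (by omega) this))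
      subst hkk
      have hmm : m = m' := by
        obtain ⟨x, hx⟩ := dC_nonempty t k m
        have hx' : x ∈ dC t k m' := heq ▸ hx
        rw [mem_dC_iff_mOf] at hx hx'
        rw [← hx, ← hx']
      rw [hmm]
    have hmax : ∀ q ∈ 𝒞K, ∃ qst ∈ 𝒬, dC t q.1 q.2 ⊆ dC t qst.1 qst.2 := by
      rintro ⟨k, m⟩ hq
      obtain ⟨x, hx⟩ := dC_nonempty t k m
      set S : ℤ → Prop := fun k' => k' ≤ K ∧ (k', mOf t k' x) ∈ 𝒞 with hS
      have hSk : S k := ⟨hq.2, by rw [(mem_dC_iff_mOf.1 hx : mOf t k x = m)]; exact hq.1⟩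
      obtain ⟨kst, hkstS, hkstmax⟩ := Int.exists_greatest_of_bdd ⟨K, fun z hz => hz.1⟩ ⟨k, hSk⟩
      set qst : ℤ × (Fin n → ℤ) := (kst, mOf t kst x) with hqst
      have hqst𝒞K : qst ∈ 𝒞K := ⟨hkstS.2, hkstS.1⟩
      have hsub : dC t k m ⊆ dC t kst (mOf t kst x) := by
        rcases dC_nested (t := t) (m := m) (m' := mOf t kst x) (hkstmax k hSk) with hs | hd
        · exact hs
        · exact absurd (Set.disjoint_left.1 hd hx (mem_dC_mOf t kst x)) (fun h => h)
      refine ⟨qst, ⟨hqst𝒞K, ?_⟩, hsub⟩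
      rintro ⟨k', m'⟩ hq' hsub'
      have hxq' : x ∈ dC t k' m' := hsub' (mem_dC_mOf t kst x)
      have hm' : mOf t k' x = m' := mem_dC_iff_mOf.1 hxq'
      have hk'S : S k' := ⟨hq'.2, by rw [hm']; exact hq'.1⟩
      have hk'le : k' ≤ kst := hkstmax k' hk'S
      rcases eq_or_lt_of_le hk'le with rfl | hlt'
      · rw [← hm']
      · exfalso
        have h1 : volume (dC t kst (mOf t kst x)) ≤ volume (dC t k' m') := measure_mono hsub'
        rw [volume_dC, volume_dC] at h1
        have h2 : ENNReal.ofReal ((2:ℝ)^k') < ENNReal.ofReal ((2:ℝ)^kst) :=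
          (ENNReal.ofReal_lt_ofReal_iff (two_zpow_pos _)).2 (zpow_lt_zpow_right₀ (by norm_num) hlt')
        exact absurd h1 (not_le.2 (ENNReal.pow_lt_pow_left (by omega) h2))
    have hdisj : 𝒬.PairwiseDisjoint (fun q => dC t q.1 q.2) := by
      rintro q hq q' hq' hne
      by_cases heq : dC t q.1 q.2 = dC t q'.1 q'.2
      · exact absurd (hinj q hq q' hq' heq) hne
      rcases le_total q.1 q'.1 with hle | hle
      · rcases dC_nested (t := t) (m := q.2) (m' := q'.2) hle with hs | hd
        · exact absurd (hq.2 q' hq'.1 hs).symm heq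
        · exact hd
      · rcases dC_nested (t := t) (m := q'.2) (m' := q.2) hle with hs | hd
        · exact absurd (hq'.2 q hq.1 hs) heq
        · exact (hd.symm)
    have hcover : (⋃ q ∈ 𝒞K, dC t q.1 q.2) = ⋃ q ∈ 𝒬, dC t q.1 q.2 := by
      apply Set.Subset.antisymm
      · intro x hx
        simp only [Set.mem_iUnion] at hx ⊢
        obtain ⟨q, hq, hxq⟩ := hx
        obtain ⟨qst, hqst, hsub⟩ := hmax q hq
        exact ⟨qst, hqst, hsub hxq⟩
      · exact Set.iUnion₂_mono' fun q hq => ⟨q, hq.1, le_refl _⟩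
    rw [hcover]
    have hcnt : 𝒬.Countable := Set.to_countable _
    calc μ (⋃ q ∈ 𝒬, dC t q.1 q.2) ≤ ∑' (q : ↥𝒬), μ (dC t (q:ℤ × (Fin n → ℤ)).1 (q:ℤ × (Fin n → ℤ)).2) :=
          measure_biUnion_le μ hcnt _
    _ ≤ ∑' (q : ↥𝒬), l⁻¹ * ∫⁻ y in dC t (q:ℤ × (Fin n → ℤ)).1 (q:ℤ × (Fin n → ℤ)).2, F y ∂μ := by
          apply ENNReal.tsum_le_tsum
          rintro ⟨q, hq⟩
          apply cube_cheby hl0 hlt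
          · exact fun h => hI (top_unique (h ▸ setLIntegral_le_lintegral _ _))
          · exact hq.1.1
    _ = l⁻¹ * ∑' (q : ↥𝒬), ∫⁻ y in dC t (q:ℤ × (Fin n → ℤ)).1 (q:ℤ × (Fin n → ℤ)).2, F y ∂μ :=
          ENNReal.tsum_mul_left
    _ = l⁻¹ * ∫⁻ y in (⋃ q ∈ 𝒬, dC t q.1 q.2), F y ∂μ := by
          rw [lintegral_biUnion hcnt (fun q _ => measurableSet_dC t q.1 q.2) hdisj]
    _ ≤ l⁻¹ * ∫⁻ y, F y ∂μ := mul_le_mul_right (setLIntegral_le_lintegral _ _) _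
  -- combine over K
  have hmono : Monotone (fun K : ℤ => ⋃ q ∈ {q ∈ 𝒞 | q.1 ≤ K}, dC t q.1 q.2) := by
    intro K K' hKK'
    apply Set.iUnion₂_mono'
    exact fun q hq => ⟨q, ⟨hq.1, hq.2.trans hKK'⟩, le_refl _⟩
  have hU : (⋃ q ∈ 𝒞, dC t q.1 q.2) = ⋃ K : ℤ, ⋃ q ∈ {q ∈ 𝒞 | q.1 ≤ K}, dC t q.1 q.2 := by
    apply Set.Subset.antisymm
    · intro x hx
      simp only [Set.mem_iUnion] at hx ⊢
      obtain ⟨q, hq, hxq⟩ := hx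
      exact ⟨q.1, q, ⟨hq, le_refl _⟩, hxq⟩
    · simp only [Set.iUnion_subset_iff]
      intro K q hq
      exact Set.subset_iUnion₂_of_subset q hq.1 (le_refl _)
  rw [hU, hmono.measure_iUnion]
  exact iSup_le key

end DyMax

noncomputable section Lq
variable {n : ℕ}
local notation "α" => (Fin n → ℝ)

def dpow (j : ℤ) : ℝ≥0∞ := (2:ℝ≥0∞) ^ ((j:ℝ))

lemma dpow_ne_zero (j : ℤ) : dpow j ≠ 0 := by
  intro h
  rw [dpow, ENNReal.rpow_eq_zero_iff] at h
  rcases h with ⟨h1, _⟩ | ⟨h1, _⟩ <;> norm_num at h1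
lemma dpow_ne_top (j : ℤ) : dpow j ≠ ∞ := by
  intro h
  rw [dpow, ENNReal.rpow_eq_top_iff] at h
  rcases h with ⟨h1, _⟩ | ⟨h1, _⟩ <;> norm_num at h1
lemma dpow_eq_ofReal (j : ℤ) : dpow j = ENNReal.ofReal ((2:ℝ)^j) := by
  calc dpow j = (ENNReal.ofReal 2)^((j:ℝ)) := by rw [dpow]; norm_num
  _ = ENNReal.ofReal ((2:ℝ)^((j:ℝ))) := ENNReal.ofReal_rpow_of_pos (by norm_num)
  _ = ENNReal.ofReal ((2:ℝ)^j) := by rw [Real.rpow_intCast]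

lemma two_mul_dpow (j : ℤ) : 2 * dpow (j-1) = dpow j := by
  rw [dpow, dpow]
  have hc : ((j - 1 : ℤ):ℝ) = (j:ℝ) + (-1) := by push_cast; ring
  rw [hc, ENNReal.rpow_add _ _ (by norm_num) (by norm_num)]
  have h2 : (2:ℝ≥0∞)^(-1:ℝ) = 2⁻¹ := by rw [← ENNReal.rpow_one 2, ← ENNReal.rpow_neg]; norm_num
  rw [h2]
  calc 2 * ((2:ℝ≥0∞)^((j:ℝ)) * 2⁻¹) = (2:ℝ≥0∞)^((j:ℝ)) * (2 * 2⁻¹) := by ring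
  _ = (2:ℝ≥0∞)^((j:ℝ)) := by
      rw [ENNReal.mul_inv_cancel (by norm_num) (by norm_num), mul_one]

/-- truncation estimate -/
lemma dyM_trunc (t : Fin n → ℤ) (μ : Measure α) (F : α → ℝ≥0∞) (l' : ℝ≥0∞) (x : α) :
    dyM t μ F x ≤ dyM t μ ({y | l' < F y}.indicator F) x + l' := by
  apply iSup_le; intro k; apply iSup_le; intro m; apply iSup_le; intro hx
  set F1 := ({y | l' < F y}.indicator F) with hF1
  set P := dC t k m
  have hpoint : ∀ y, F y ≤ F1 y + l' := by
    intro y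
    rw [hF1, Set.indicator_apply]
    by_cases h : y ∈ {y | l' < F y}
    · rw [if_pos h]; exact le_self_add
    · rw [if_neg h]
      simp only [Set.mem_setOf_eq, not_lt] at h
      exact h.trans le_add_self
  have hint : ∫⁻ y in P, F y ∂μ ≤ ∫⁻ y in P, F1 y ∂μ + l' * μ P := by
    calc ∫⁻ y in P, F y ∂μ ≤ ∫⁻ y in P, (F1 y + l') ∂μ := lintegral_mono hpoint
    _ = ∫⁻ y in P, F1 y ∂μ + l' * μ P := by
        rw [lintegral_add_right _ measurable_const, setLIntegral_const]
  have hmulP : (μ P)⁻¹ * (l' * μ P) ≤ l' := by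
    rcases eq_or_ne (μ P) 0 with h0 | h0
    · simp [h0]
    rcases eq_or_ne (μ P) ∞ with ht | ht
    · simp [ht]
    have heq : (μ P)⁻¹ * (l' * μ P) = l' * ((μ P)⁻¹ * μ P) := by ring
    rw [heq, ENNReal.inv_mul_cancel h0 ht, mul_one]
  calc dAvg μ P F = (μ P)⁻¹ * ∫⁻ y in P, F y ∂μ := rfl
  _ ≤ (μ P)⁻¹ * (∫⁻ y in P, F1 y ∂μ + l' * μ P) := mul_le_mul_right hint _
  _ = (μ P)⁻¹ * ∫⁻ y in P, F1 y ∂μ + (μ P)⁻¹ * (l' * μ P) := by rw [mul_add]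
  _ ≤ dyM t μ F1 x + l' := add_le_add (dAvg_le_dyM t μ F1 hx) hmulP

lemma dyM_trunc_weak (hn : 1 ≤ n) (t : Fin n → ℤ) (μ : Measure α) {F : α → ℝ≥0∞}
    (hF : Measurable F) {l' : ℝ≥0∞} (hl0 : l' ≠ 0) (hlt : l' ≠ ∞) :
    μ {x | 2*l' < dyM t μ F x} ≤ l'⁻¹ * ∫⁻ y in {y | l' < F y}, F y ∂μ := by
  set F1 := ({y | l' < F y}.indicator F) with hF1
  have hsub : {x | 2*l' < dyM t μ F x} ⊆ {x | l' < dyM t μ F1 x} := by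
    intro x hx
    simp only [Set.mem_setOf_eq] at hx ⊢
    have h1 := dyM_trunc t μ F l' x
    have h2 : l' + l' < dyM t μ F1 x + l' := by
      calc l' + l' = 2 * l' := (two_mul l').symm
      _ < dyM t μ F x := hx
      _ ≤ dyM t μ F1 x + l' := h1
    exact (ENNReal.add_lt_add_iff_right hlt).1 h2
  calc μ {x | 2*l' < dyM t μ F x} ≤ μ {x | l' < dyM t μ F1 x} := measure_mono hsub
  _ ≤ l'⁻¹ * ∫⁻ y, F1 y ∂μ := dyM_weak hn t μ F1 hl0 hlt
  _ = l'⁻¹ * ∫⁻ y in {y | l' < F y}, F y ∂μ := by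
      rw [hF1, lintegral_indicator (measurableSet_lt measurable_const hF)]

/-- geometric tail bound -/
lemma geom_tail {s : ℝ} (hs : 0 < s) (J : ℤ) :
    ∑' j : ℤ, (if j ≤ J then (2:ℝ≥0∞)^((j:ℝ)*s) else 0)
      ≤ (2:ℝ≥0∞)^((J:ℝ)*s) * (1 - (2:ℝ≥0∞)^(-s))⁻¹ := by
  rw [ENNReal.tsum_eq_iSup_sum]
  apply iSup_le
  intro Fs
  classical
  have h1 : ∑ j ∈ Fs, (if j ≤ J then (2:ℝ≥0∞)^((j:ℝ)*s) else 0)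
      = ∑ j ∈ Fs.filter (· ≤ J), (2:ℝ≥0∞)^((j:ℝ)*s) := (Finset.sum_filter _ _).symm
  rw [h1]
  set T := Fs.filter (· ≤ J) with hT
  have hTle : ∀ j ∈ T, j ≤ J := fun j hj => (Finset.mem_filter.1 hj).2
  set g : ℕ → ℝ≥0∞ := fun i => (2:ℝ≥0∞)^(((J:ℝ) - (i:ℝ)) * s) with hg
  have h2 : ∑ j ∈ T, (2:ℝ≥0∞)^((j:ℝ)*s) = ∑ i ∈ T.image (fun j => (J - j).toNat), g i := by
    rw [Finset.sum_image (by intro x hx y hy hxy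
                             have hx' := hTle x hx; have hy' := hTle y hy; simp only at hxy
                             omega)]
    apply Finset.sum_congr rfl
    intro j hj
    have hjJ := hTle j hj
    rw [hg]
    congr 1
    have : ((J - j).toNat : ℝ) = (J:ℝ) - (j:ℝ) := by
      have : ((J - j).toNat : ℤ) = J - j := Int.toNat_of_nonneg (by omega)
      exact_mod_cast this
    rw [this]; ring
  rw [h2]
  calc ∑ i ∈ T.image (fun j => (J - j).toNat), g i ≤ ∑' i : ℕ, g i := ENNReal.sum_le_tsum _
  _ = ∑' i : ℕ, (2:ℝ≥0∞)^((J:ℝ)*s) * ((2:ℝ≥0∞)^(-s))^i := by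
      apply tsum_congr
      intro i
      show (2:ℝ≥0∞)^(((J:ℝ) - (i:ℝ)) * s) = _
      have : ((J:ℝ) - (i:ℝ)) * s = (J:ℝ)*s + (-s) * (i:ℝ) := by ring
      rw [this, ENNReal.rpow_add _ _ (by norm_num) (by norm_num),
        ENNReal.rpow_mul 2 (-s) (i:ℝ), ENNReal.rpow_natCast]
  _ = (2:ℝ≥0∞)^((J:ℝ)*s) * (1 - (2:ℝ≥0∞)^(-s))⁻¹ := by
      rw [ENNReal.tsum_mul_left, ENNReal.tsum_geometric]

end Lq
noncomputable section LqMain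
variable {n : ℕ}
local notation "α" => (Fin n → ℝ)

lemma dpow_rpow (i : ℤ) (s : ℝ) : (dpow i)^s = (2:ℝ≥0∞)^((i:ℝ)*s) := by
  rw [dpow, ← ENNReal.rpow_mul]

lemma twopow_ne_zero (x : ℝ) : (2:ℝ≥0∞)^x ≠ 0 := by
  intro h
  rw [ENNReal.rpow_eq_zero_iff] at h
  rcases h with ⟨h1, _⟩ | ⟨h1, _⟩ <;> norm_num at h1

lemma twopow_ne_top (x : ℝ) : (2:ℝ≥0∞)^x ≠ ∞ := by
  intro h
  rw [ENNReal.rpow_eq_top_iff] at h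
  rcases h with ⟨h1, _⟩ | ⟨h1, _⟩ <;> norm_num at h1

lemma twopow_mul_twopow (x y : ℝ) : (2:ℝ≥0∞)^x * (2:ℝ≥0∞)^y = (2:ℝ≥0∞)^(x+y) :=
  (ENNReal.rpow_add x y (by norm_num) (by norm_num)).symm

theorem dyM_Lq (hn : 1 ≤ n) {q : ℝ} (hq : 1 < q) :
    ∃ C : ℝ≥0∞, 0 < C ∧ C < ∞ ∧ ∀ (t : Fin n → ℤ) (μ : Measure α) (F : α → ℝ≥0∞),
      Measurable F → ∫⁻ x, (dyM t μ F x)^q ∂μ ≤ C * ∫⁻ x, (F x)^q ∂μ := by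
  have hq0 : 0 < q := by linarith
  set r : ℝ≥0∞ := (2:ℝ≥0∞)^(-(q-1)) with hr
  have hr1 : r < 1 := by
    rw [hr, ENNReal.rpow_neg]
    exact ENNReal.inv_lt_one.2 (ENNReal.one_lt_rpow (by norm_num) (by linarith))
  have hrne : (1:ℝ≥0∞) - r ≠ 0 := fun h => absurd (tsub_eq_zero_iff_le.1 h) (not_le.2 hr1)
  set C : ℝ≥0∞ := (2:ℝ≥0∞)^(2*q) * (1 - r)⁻¹ with hC
  have hC0 : 0 < C := by
    rw [hC]
    exact ENNReal.mul_pos (twopow_ne_zero _)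
      (ENNReal.inv_ne_zero.2 (ne_top_of_le_ne_top ENNReal.one_ne_top tsub_le_self))
  have hCtop : C < ∞ := by
    rw [hC]
    exact ENNReal.mul_lt_top (twopow_ne_top _).lt_top (ENNReal.inv_lt_top.2 (pos_iff_ne_zero.2 hrne))
  refine ⟨C, hC0, hCtop, ?_⟩
  intro t μ F hF
  set G := dyM t μ F with hG
  have hGm := measurable_dyM t μ F
  set I := ∫⁻ x, F x ^ q ∂μ with hI
  by_cases hItop : I = ∞
  · rw [hItop, ENNReal.mul_top (ne_of_gt hC0)]; exact le_top
  have hFfin : ∀ᵐ x ∂μ, F x < ∞ := by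
    have h1 : ∀ᵐ x ∂μ, F x ^ q < ∞ := ae_lt_top (hF.pow_const q) hItop
    filter_upwards [h1] with x hx
    by_contra h
    rw [not_lt, top_le_iff] at h
    rw [h, ENNReal.top_rpow_of_pos hq0] at hx
    exact absurd hx (lt_irrefl _)
  -- truncated integral bound
  have hTI : ∀ j : ℤ, ∫⁻ y in {y | dpow (j-1) < F y}, F y ∂μ ≤ (dpow (j-1))^(1-q) * I := by
    intro j
    set l' := dpow (j-1) with hl'
    have hstep : ∀ y ∈ {y | l' < F y}, F y ≤ l'^(1-q) * F y ^ q := by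
      intro y hy
      simp only [Set.mem_setOf_eq] at hy
      rcases eq_or_ne (F y) ∞ with htop | htop
      · rw [htop, ENNReal.top_rpow_of_pos hq0,
            ENNReal.mul_top (by rw [hl', dpow_rpow]; exact twopow_ne_zero _)]
      have hy0 : F y ≠ 0 := by
        intro h0
        rw [h0] at hy
        exact absurd hy (by simp)
      have h1 : F y = F y ^ q * F y ^ (1-q) := by
        rw [← ENNReal.rpow_add _ _ hy0 htop]
        norm_num
      have h2 : F y ^ (1-q) ≤ l'^(1-q) := by
        rw [show (1-q) = -(q-1) by ring, ENNReal.rpow_neg, ENNReal.rpow_neg]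
        exact ENNReal.inv_le_inv.2 (ENNReal.rpow_le_rpow hy.le (by linarith))
      calc F y = F y ^ q * F y ^ (1-q) := h1
      _ ≤ F y ^ q * l'^(1-q) := mul_le_mul_right h2 _
      _ = l'^(1-q) * F y ^ q := mul_comm _ _
    calc ∫⁻ y in {y | l' < F y}, F y ∂μ
        ≤ ∫⁻ y in {y | l' < F y}, l'^(1-q) * F y ^ q ∂μ :=
          setLIntegral_mono (measurable_const.mul (hF.pow_const q)) hstep
    _ = l'^(1-q) * ∫⁻ y in {y | l' < F y}, F y ^ q ∂μ := lintegral_const_mul' _ _ (by rw [hl', dpow_rpow]; exact twopow_ne_top _)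
    _ ≤ l'^(1-q) * I := mul_le_mul_right (setLIntegral_le_lintegral _ _) _
  have hweakG : ∀ j : ℤ, μ {x | dpow j < G x} ≤ (dpow (j-1))⁻¹ * ∫⁻ y in {y | dpow (j-1) < F y}, F y ∂μ := by
    intro j
    have h := dyM_trunc_weak hn t μ hF (dpow_ne_zero (j-1)) (dpow_ne_top (j-1))
    rwa [two_mul_dpow] at h
  -- G is a.e. finite
  have hGtop : μ {x | G x = ∞} = 0 := by
    have hb : ∀ N : ℕ, μ {x | G x = ∞} ≤ ((2:ℝ≥0∞)^(-q))^N * I := by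
      intro N
      have h1 : μ {x | G x = ∞} ≤ μ {x | dpow ((N:ℤ)+1) < G x} := by
        apply measure_mono
        intro x hx
        simp only [Set.mem_setOf_eq] at hx ⊢
        rw [hx]
        exact (dpow_ne_top _).lt_top
      have h2 : ((N:ℤ)+1-1 : ℤ) = (N:ℤ) := by ring
      calc μ {x | G x = ∞} ≤ μ {x | dpow ((N:ℤ)+1) < G x} := h1
      _ ≤ (dpow ((N:ℤ)+1-1))⁻¹ * ∫⁻ y in {y | dpow ((N:ℤ)+1-1) < F y}, F y ∂μ := hweakG _
      _ ≤ (dpow ((N:ℤ)+1-1))⁻¹ * ((dpow ((N:ℤ)+1-1))^(1-q) * I) := mul_le_mul_right (hTI _) _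
      _ = ((2:ℝ≥0∞)^(-q))^N * I := by
          rw [h2]
          rw [← mul_assoc]
          congr 1
          rw [← ENNReal.rpow_neg_one (dpow (N:ℤ)), dpow_rpow, dpow_rpow, twopow_mul_twopow]
          rw [← ENNReal.rpow_natCast ((2:ℝ≥0∞)^(-q)) N, ← ENNReal.rpow_mul]
          congr 1
          push_cast
          ring
    have htend : Tendsto (fun N : ℕ => ((2:ℝ≥0∞)^(-q))^N * I) atTop (𝓝 0) := by
      have h0 : ((2:ℝ≥0∞)^(-q)) < 1 := by
        rw [ENNReal.rpow_neg]
        exact ENNReal.inv_lt_one.2 (ENNReal.one_lt_rpow (by norm_num) hq0)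
      have h1 := ENNReal.tendsto_pow_atTop_nhds_zero_of_lt_one h0
      have h2 := ENNReal.Tendsto.mul_const h1 (Or.inr hItop)
      simpa using h2
    exact le_zero_iff.1 (ge_of_tendsto' htend hb)
  -- split into levels
  set A : ℤ → Set α := fun j => {x | dpow j < G x ∧ G x ≤ dpow (j+1)} with hA
  set S : ℤ → Set α := fun j => {y | dpow (j-1) < F y} with hS
  have hAm : ∀ j, MeasurableSet (A j) := by
    intro j
    exact (hGm measurableSet_Ioi).inter (hGm measurableSet_Iic)
  have hsplit : ∫⁻ x, G x ^ q ∂μ ≤ ∑' j : ℤ, ∫⁻ x in A j, G x ^ q ∂μ := by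
    have hae : (fun x => G x ^ q) =ᵐ[μ] (⋃ j : ℤ, A j).indicator (fun x => G x ^ q) := by
      have hae0 : ∀ᵐ x ∂μ, G x ≠ ∞ := by
        rw [ae_iff]
        simpa using hGtop
      filter_upwards [hae0] with x hx
      rcases eq_or_ne (G x) 0 with h0 | h0
      · by_cases hmem : x ∈ ⋃ j : ℤ, A j
        · rw [Set.indicator_of_mem hmem]
        · rw [Set.indicator_of_notMem hmem, h0, ENNReal.zero_rpow_of_pos hq0]
      · have hxU : x ∈ ⋃ j : ℤ, A j := by
          have ht0 : 0 < (G x).toReal := ENNReal.toReal_pos h0 hx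
          obtain ⟨j, hj1, hj2⟩ := exists_mem_Ioc_zpow ht0 (by norm_num : (1:ℝ) < 2)
          refine Set.mem_iUnion.2 ⟨j, ?_, ?_⟩
          · show dpow j < G x
            rw [dpow_eq_ofReal, ← ENNReal.ofReal_toReal hx]
            exact (ENNReal.ofReal_lt_ofReal_iff ht0).2 hj1
          · show G x ≤ dpow (j+1)
            rw [← ENNReal.ofReal_toReal hx, dpow_eq_ofReal]
            exact ENNReal.ofReal_le_ofReal hj2
        rw [Set.indicator_of_mem hxU]
    calc ∫⁻ x, G x ^ q ∂μ = ∫⁻ x, (⋃ j : ℤ, A j).indicator (fun x => G x ^ q) x ∂μ :=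
          lintegral_congr_ae hae
    _ = ∫⁻ x in ⋃ j : ℤ, A j, G x ^ q ∂μ := lintegral_indicator (MeasurableSet.iUnion hAm) _
    _ ≤ ∑' j : ℤ, ∫⁻ x in A j, G x ^ q ∂μ := lintegral_iUnion_le _ _
  -- per-level bound
  set c : ℤ → ℝ≥0∞ := fun j => (dpow (j+1))^q * (dpow (j-1))⁻¹ with hc
  have hcval : ∀ j, c j = (2:ℝ≥0∞)^(q+1) * (2:ℝ≥0∞)^((j:ℝ)*(q-1)) := by
    intro j
    rw [hc]
    simp only
    rw [dpow_rpow, ← ENNReal.rpow_neg_one (dpow (j-1)), dpow_rpow, twopow_mul_twopow, twopow_mul_twopow]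
    congr 1
    push_cast
    ring
  have hcne : ∀ j, c j ≠ ∞ := by
    intro j
    rw [hcval j, twopow_mul_twopow]
    exact twopow_ne_top _
  have hlevel : ∀ j : ℤ, ∫⁻ x in A j, G x ^ q ∂μ ≤ c j * ∫⁻ y in S j, F y ∂μ := by
    intro j
    calc ∫⁻ x in A j, G x ^ q ∂μ ≤ ∫⁻ _x in A j, (dpow (j+1))^q ∂μ := by
          apply setLIntegral_mono measurable_const
          intro x hx
          exact ENNReal.rpow_le_rpow hx.2 (le_of_lt hq0)
    _ = (dpow (j+1))^q * μ (A j) := setLIntegral_const _ _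
    _ ≤ (dpow (j+1))^q * μ {x | dpow j < G x} :=
          mul_le_mul_right (measure_mono (fun x hx => hx.1)) _
    _ ≤ (dpow (j+1))^q * ((dpow (j-1))⁻¹ * ∫⁻ y in S j, F y ∂μ) := mul_le_mul_right (hweakG j) _
    _ = c j * ∫⁻ y in S j, F y ∂μ := by rw [hc, mul_assoc]
  -- sum and swap
  have hswap : ∑' j : ℤ, c j * ∫⁻ y in S j, F y ∂μ
      = ∫⁻ y, (∑' j : ℤ, c j * (S j).indicator F y) ∂μ := by
    rw [lintegral_tsum]
    · apply tsum_congr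
      intro j
      rw [lintegral_const_mul' _ _ (hcne j), lintegral_indicator]
      exact measurableSet_lt measurable_const hF
    · intro j
      exact (measurable_const.mul (hF.indicator (measurableSet_lt measurable_const hF))).aemeasurable
  -- pointwise bound
  have hpw : ∀ᵐ y ∂μ, (∑' j : ℤ, c j * (S j).indicator F y) ≤ C * F y ^ q := by
    filter_upwards [hFfin] with y hyfin
    rcases eq_or_ne (F y) 0 with h0 | h0
    · have : ∀ j : ℤ, c j * (S j).indicator F y = 0 := by
        intro j
        rw [Set.indicator_apply]
        by_cases hmem : y ∈ S j
        · rw [if_pos hmem, h0, mul_zero]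
        · rw [if_neg hmem, mul_zero]
      rw [tsum_congr this, tsum_zero]
      exact zero_le
    · have ht0 : 0 < (F y).toReal := ENNReal.toReal_pos h0 hyfin.ne
      obtain ⟨j0, hj01, hj02⟩ := exists_mem_Ioc_zpow ht0 (by norm_num : (1:ℝ) < 2)
      set J := j0 + 1 with hJ
      have hJle : ∀ j : ℤ, y ∈ S j → j ≤ J := by
        intro j hmem
        simp only [hS, Set.mem_setOf_eq] at hmem
        rw [dpow_eq_ofReal, ← ENNReal.ofReal_toReal hyfin.ne] at hmem
        have h1 : (2:ℝ)^(j-1) < (F y).toReal := by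
          by_contra hcon
          push_neg at hcon
          exact absurd (lt_of_lt_of_le ((ENNReal.ofReal_lt_ofReal_iff ht0).1 hmem) hcon) (lt_irrefl _)
        have h2 : (2:ℝ)^(j-1) < (2:ℝ)^(j0+1) := lt_of_lt_of_le h1 hj02
        have h3 : j - 1 < j0 + 1 := by
          by_contra hcon
          push_neg at hcon
          exact absurd (zpow_le_zpow_right₀ (by norm_num : (1:ℝ) ≤ 2) hcon) (not_le.2 h2)
        omega
      have hterm : ∀ j : ℤ, c j * (S j).indicator F y
          ≤ (if j ≤ J then (2:ℝ≥0∞)^((j:ℝ)*(q-1)) else 0) * ((2:ℝ≥0∞)^(q+1) * F y) := by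
        intro j
        rw [Set.indicator_apply]
        by_cases hmem : y ∈ S j
        · rw [if_pos hmem, if_pos (hJle j hmem), hcval]
          calc (2:ℝ≥0∞)^(q+1) * (2:ℝ≥0∞)^((j:ℝ)*(q-1)) * F y
              = (2:ℝ≥0∞)^((j:ℝ)*(q-1)) * ((2:ℝ≥0∞)^(q+1) * F y) := by ring
          _ ≤ _ := le_refl _
        · rw [if_neg hmem, mul_zero]
          exact zero_le
      calc (∑' j : ℤ, c j * (S j).indicator F y)
          ≤ ∑' j : ℤ, (if j ≤ J then (2:ℝ≥0∞)^((j:ℝ)*(q-1)) else 0) * ((2:ℝ≥0∞)^(q+1) * F y) :=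
            ENNReal.tsum_le_tsum hterm
      _ = (∑' j : ℤ, (if j ≤ J then (2:ℝ≥0∞)^((j:ℝ)*(q-1)) else 0)) * ((2:ℝ≥0∞)^(q+1) * F y) :=
            ENNReal.tsum_mul_right
      _ ≤ ((2:ℝ≥0∞)^((J:ℝ)*(q-1)) * (1 - (2:ℝ≥0∞)^(-(q-1)))⁻¹) * ((2:ℝ≥0∞)^(q+1) * F y) :=
            mul_le_mul_left (geom_tail (by linarith) J) _
      _ ≤ (((2:ℝ≥0∞)^(q-1) * F y ^ (q-1)) * (1 - r)⁻¹) * ((2:ℝ≥0∞)^(q+1) * F y) := by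
            apply mul_le_mul_left
            apply mul_le_mul_left
            -- 2^{J(q-1)} ≤ 2^{q-1} F^{q-1}
            have hdJ : dpow J ≤ 2 * F y := by
              rw [dpow_eq_ofReal, hJ, ← ENNReal.ofReal_toReal hyfin.ne]
              have h1 : (2:ℝ)^(j0+1) ≤ 2 * (F y).toReal := by
                rw [zpow_add₀ (by norm_num : (2:ℝ) ≠ 0), zpow_one]
                nlinarith [hj01]
              calc ENNReal.ofReal ((2:ℝ)^(j0+1)) ≤ ENNReal.ofReal (2 * (F y).toReal) :=
                    ENNReal.ofReal_le_ofReal h1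
              _ = ENNReal.ofReal 2 * ENNReal.ofReal ((F y).toReal) := ENNReal.ofReal_mul (by norm_num)
              _ = 2 * ENNReal.ofReal ((F y).toReal) := by norm_num
            calc (2:ℝ≥0∞)^((J:ℝ)*(q-1)) = (dpow J)^(q-1) := (dpow_rpow J (q-1)).symm
            _ ≤ (2 * F y)^(q-1) := ENNReal.rpow_le_rpow hdJ (by linarith)
            _ = (2:ℝ≥0∞)^(q-1) * F y ^ (q-1) :=
                  ENNReal.mul_rpow_of_nonneg _ _ (by linarith : (0:ℝ) ≤ q-1)
      _ = C * F y ^ q := by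
            rw [hC]
            have hFq : F y ^ (q-1) * F y = F y ^ q := by
              nth_rewrite 2 [← ENNReal.rpow_one (F y)]
              rw [← ENNReal.rpow_add _ _ h0 hyfin.ne]
              norm_num
            calc ((2:ℝ≥0∞)^(q-1) * F y ^ (q-1)) * (1 - r)⁻¹ * ((2:ℝ≥0∞)^(q+1) * F y)
                = ((2:ℝ≥0∞)^(q-1) * (2:ℝ≥0∞)^(q+1)) * (1 - r)⁻¹ * (F y ^ (q-1) * F y) := by ring
            _ = (2:ℝ≥0∞)^(2*q) * (1 - r)⁻¹ * F y ^ q := by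
                  rw [twopow_mul_twopow, hFq, (show q - 1 + (q+1) = 2*q by ring)]
            _ = _ := by ring
  -- conclude
  calc ∫⁻ x, G x ^ q ∂μ ≤ ∑' j : ℤ, ∫⁻ x in A j, G x ^ q ∂μ := hsplit
  _ ≤ ∑' j : ℤ, c j * ∫⁻ y in S j, F y ∂μ := ENNReal.tsum_le_tsum hlevel
  _ = ∫⁻ y, (∑' j : ℤ, c j * (S j).indicator F y) ∂μ := hswap
  _ ≤ ∫⁻ y, C * F y ^ q ∂μ := lintegral_mono_ae hpw
  _ = C * I := lintegral_const_mul' _ _ (ne_of_lt hCtop)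

end LqMain
noncomputable section Lerner
variable {n : ℕ}
local notation "α" => (Fin n → ℝ)

lemma rpow_iSup {ι : Sort*} (f : ι → ℝ≥0∞) {y : ℝ} (hy : 0 < y) :
    (⨆ i, f i)^y = ⨆ i, (f i)^y := by
  have h := (ENNReal.orderIsoRpow y hy).map_iSup f
  simp only [ENNReal.orderIsoRpow] at h
  exact h

lemma rpow_mul_rpow {x : ℝ≥0∞} (hx0 : x ≠ 0) (hxt : x ≠ ∞) (a b : ℝ) :
    x^a * x^b = x^(a+b) := (ENNReal.rpow_add a b hx0 hxt).symm

lemma rpow_ne_zero' {x : ℝ≥0∞} (hx0 : x ≠ 0) (hxt : x ≠ ∞) (a : ℝ) : x^a ≠ 0 := by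
  intro h
  rw [ENNReal.rpow_eq_zero_iff] at h
  rcases h with ⟨h1, _⟩ | ⟨h1, _⟩
  · exact hx0 h1
  · exact hxt h1

lemma rpow_ne_top' {x : ℝ≥0∞} (hx0 : x ≠ 0) (hxt : x ≠ ∞) (a : ℝ) : x^a ≠ ∞ := by
  intro h
  rw [ENNReal.rpow_eq_top_iff] at h
  rcases h with ⟨h1, _⟩ | ⟨h1, _⟩
  · exact hx0 h1
  · exact hxt h1

section AlgLemmas
variable {p : ℝ} (hp : 1 < p)
include hp

lemma alg1 {u : ℝ≥0∞} (hu0 : u ≠ 0) (hut : u ≠ ∞) :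
    (u^(1 - p/(p-1)))^((p-1)/p) * u^(-((p-1)/p)) * u = 1 := by
  have hp1 : (0:ℝ) < p - 1 := by linarith
  have hp0 : (0:ℝ) < p := by linarith
  have hid : (1 - p/(p-1)) * ((p-1)/p) + -((p-1)/p) + 1 = 0 := by
    field_simp
    ring
  nth_rewrite 3 [← ENNReal.rpow_one u]
  rw [← ENNReal.rpow_mul, rpow_mul_rpow hu0 hut, rpow_mul_rpow hu0 hut, hid, ENNReal.rpow_zero]

lemma alg2 {u a : ℝ≥0∞} (hu0 : u ≠ 0) (hut : u ≠ ∞) :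
    u * ((a^(p-1)) * ((u^(1 - p/(p-1)))^((p-1)/p) * u^(-((p-1)/p))))^(p/(p-1))
      = u^(1 - p/(p-1)) * a^p := by
  have hp1 : (0:ℝ) < p - 1 := by linarith
  have hp0 : (0:ℝ) < p := by linarith
  have hp'0 : (0:ℝ) < p/(p-1) := by positivity
  have hpp' : (p-1) * (p/(p-1)) = p := by field_simp
  have h1 : (1 - p/(p-1)) * ((p-1)/p) + -((p-1)/p) = -1 := by
    field_simp
    ring
  have h2 : (-1:ℝ) * (p/(p-1)) = -(p/(p-1)) := by ring
  have h3 : (1:ℝ) + -(p/(p-1)) = 1 - p/(p-1) := by ring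
  calc u * ((a^(p-1)) * ((u^(1 - p/(p-1)))^((p-1)/p) * u^(-((p-1)/p))))^(p/(p-1))
      = u * ((a^(p-1)) * u^(-1:ℝ))^(p/(p-1)) := by
        rw [← ENNReal.rpow_mul, rpow_mul_rpow hu0 hut, h1]
  _ = u * ((a^(p-1))^(p/(p-1)) * (u^(-1:ℝ))^(p/(p-1))) := by
        rw [ENNReal.mul_rpow_of_nonneg _ _ (le_of_lt hp'0)]
  _ = u^(1:ℝ) * (a^p * u^(-(p/(p-1)))) := by
        rw [← ENNReal.rpow_mul, ← ENNReal.rpow_mul, hpp', h2, ENNReal.rpow_one]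
  _ = a^p * (u^(1:ℝ) * u^(-(p/(p-1)))) := by ring
  _ = a^p * u^(1 - p/(p-1)) := by rw [rpow_mul_rpow hu0 hut, h3]
  _ = u^(1 - p/(p-1)) * a^p := mul_comm _ _

lemma alg3 {u f : ℝ≥0∞} (hu0 : u ≠ 0) (hut : u ≠ ∞) :
    u^(1 - p/(p-1)) * (f * (u^(1 - p/(p-1)))⁻¹)^p = f^p * u := by
  have hp0 : (0:ℝ) < p := by linarith
  have hp1 : (0:ℝ) < p - 1 := by linarith
  have he1p : (1 - p/(p-1)) * ((-1) * p + 1) = 1 := by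
    field_simp
    ring
  set s := u^(1 - p/(p-1)) with hs
  have hs0 : s ≠ 0 := rpow_ne_zero' hu0 hut _
  have hst : s ≠ ∞ := rpow_ne_top' hu0 hut _
  calc s * (f * s⁻¹)^p = s * (f^p * (s⁻¹)^p) := by
        rw [ENNReal.mul_rpow_of_nonneg _ _ (le_of_lt hp0)]
  _ = f^p * (s^(1:ℝ) * (s^(-1:ℝ))^p) := by rw [ENNReal.rpow_one, ENNReal.rpow_neg_one]; ring
  _ = f^p * s^((1:ℝ) + (-1)*p) := by rw [← ENNReal.rpow_mul s (-1) p, rpow_mul_rpow hs0 hst]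
  _ = f^p * u := by
        rw [hs, ← ENNReal.rpow_mul]
        congr 1
        rw [show (1 - p/(p-1)) * ((1:ℝ) + (-1)*p) = (1 - p/(p-1)) * ((-1)*p + 1) by ring, he1p,
          ENNReal.rpow_one]

end AlgLemmas

lemma setLintegral_ne_zero {u : α → ℝ≥0∞} (hu : Measurable u)
    (hupos : ∀ᵐ y, 0 < u y) {P : Set α} (hPm : MeasurableSet P) (hP0 : volume P ≠ 0) :
    (∫⁻ y in P, u y) ≠ 0 := by
  have hsupp : (Function.support u)ᶜ ⊆ {y | ¬ 0 < u y} := by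
    intro y hy
    simp only [Function.mem_support, not_not, Set.mem_compl_iff] at hy
    simp [hy]
  have hms : MeasurableSet ((Function.support u)ᶜ) := by
    have heq : (Function.support u)ᶜ = u ⁻¹' {0} := by
      ext y; simp [Function.mem_support]
    rw [heq]
    exact hu (measurableSet_singleton 0)
  have h1 : (0:ℝ≥0∞) < ∫⁻ y in P, u y := by
    rw [lintegral_pos_iff_support hu]
    have hc : volume.restrict P (Function.support u)ᶜ = 0 := by
      rw [Measure.restrict_apply hms]
      exact measure_mono_null (Set.inter_subset_left.trans hsupp) (ae_iff.mp hupos)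
    have hae : Function.support u =ᵐ[volume.restrict P] Set.univ := ae_eq_univ.2 hc
    rw [measure_congr hae, Measure.restrict_apply_univ]
    exact pos_iff_ne_zero.2 hP0
  exact ne_of_gt h1

theorem lerner_grid (hn : 1 ≤ n) {p : ℝ} (hp : 1 < p) :
    ∃ C : ℝ≥0∞, 0 < C ∧ C < ∞ ∧
    ∀ (t : Fin n → ℤ) (w : α → ℝ≥0∞), Measurable w →
      (∀ᵐ y, 0 < w y) → (∀ᵐ y, w y < ∞) →
      (∀ (k : ℤ) (m : Fin n → ℤ), (∫⁻ y in dC t k m, w y) < ∞) →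
      ∀ (Ap : ℝ≥0∞), Ap ≠ ∞ →
      (∀ (k : ℤ) (m : Fin n → ℤ),
        ((volume (dC t k m))⁻¹ * ∫⁻ y in dC t k m, w y) *
          ((volume (dC t k m))⁻¹ * ∫⁻ y in dC t k m, (w y)^(1 - p/(p-1)))^(p-1) ≤ Ap) →
      ∀ (F : α → ℝ≥0∞), Measurable F →
        ∫⁻ x, (dyM t volume F x)^p * w x ≤ C * Ap^(p/(p-1)) * ∫⁻ x, F x ^ p * w x := by
  have hp0 : (0:ℝ) < p := by linarith
  have hp1 : (0:ℝ) < p - 1 := by linarith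
  have hp'1 : 1 < p/(p-1) := by rw [lt_div_iff₀ hp1]; linarith
  have hp'0 : (0:ℝ) < p/(p-1) := by linarith
  have hpp' : (p-1) * (p/(p-1)) = p := by field_simp
  obtain ⟨Cp', hCp'0, hCp't, hCp'⟩ := dyM_Lq hn hp'1
  obtain ⟨Cp, hCp0, hCpt, hCp⟩ := dyM_Lq hn hp
  refine ⟨Cp' * Cp, ENNReal.mul_pos (ne_of_gt hCp'0) (ne_of_gt hCp0),
    ENNReal.mul_lt_top hCp't hCpt, ?_⟩
  intro t w hw hwpos hwlt hwint Ap hApt hcube F hF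
  set σ : α → ℝ≥0∞ := fun y => (w y) ^ (1 - p/(p-1)) with hσdef
  have hσm : Measurable σ := hw.pow_const _
  have hσae : ∀ᵐ y, (0 < σ y ∧ σ y < ∞) ∧ (0 < w y ∧ w y < ∞) := by
    filter_upwards [hwpos, hwlt] with y h1 h2
    refine ⟨⟨?_, ?_⟩, h1, h2⟩
    · simp only [hσdef]
      exact ENNReal.rpow_pos h1 h2.ne
    · simp only [hσdef, lt_top_iff_ne_top]
      exact rpow_ne_top' (ne_of_gt h1) h2.ne _
  set μw := volume.withDensity w with hμw
  set μσ := volume.withDensity σ with hμσ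
  set g : α → ℝ≥0∞ := fun y => F y * (σ y)⁻¹ with hgdef
  have hgm : Measurable g := hF.mul hσm.inv
  set Mσ : α → ℝ≥0∞ := dyM t μσ g with hMσdef
  have hMσm : Measurable Mσ := measurable_dyM t μσ g
  set H : α → ℝ≥0∞ := fun y => (Mσ y)^(p-1) * ((σ y)^((p-1)/p) * (w y)^(-((p-1)/p))) with hHdef
  have hHm : Measurable H :=
    (hMσm.pow_const _).mul ((hσm.pow_const _).mul (hw.pow_const _))
  -- pointwise Lerner estimate
  have step1 : ∀ x, (dyM t volume F x)^(p-1) ≤ Ap * dyM t μw H x := by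
    intro x
    have hiso : (dyM t volume F x)^(p-1)
        = ⨆ (k:ℤ) (m : Fin n → ℤ) (_ : x ∈ dC t k m), (dAvg volume (dC t k m) F)^(p-1) := by
      simp only [dyM]
      rw [rpow_iSup _ hp1]
      congr 1; funext k
      rw [rpow_iSup _ hp1]
      congr 1; funext m
      rw [rpow_iSup _ hp1]
    rw [hiso]
    apply iSup_le; intro k; apply iSup_le; intro m; apply iSup_le; intro hx
    have hPm : MeasurableSet (dC t k m) := measurableSet_dC t k m
    set P := dC t k m with hPdef
    set A := volume P with hA
    set W := ∫⁻ y in P, w y with hW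
    set S := ∫⁻ y in P, σ y with hS
    have hA0 : A ≠ 0 := ne_of_gt (volume_dC_pos t k m)
    have hAt : A ≠ ∞ := ne_of_lt (volume_dC_lt_top t k m)
    have hW0 : W ≠ 0 := setLintegral_ne_zero hw hwpos hPm hA0
    have hWt : W ≠ ∞ := ne_of_lt (hwint k m)
    have hS0 : S ≠ 0 :=
      setLintegral_ne_zero hσm (by filter_upwards [hσae] with y hy; exact hy.1.1) hPm hA0
    have hcubeP : (A⁻¹ * W) * (A⁻¹ * S)^(p-1) ≤ Ap := hcube k m
    have hSt : S ≠ ∞ := by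
      intro hStop
      have h1 : (A⁻¹ * S)^(p-1) = ∞ := by
        rw [hStop, ENNReal.mul_top (ENNReal.inv_ne_zero.2 hAt), ENNReal.top_rpow_of_pos hp1]
      have h2 : ((A⁻¹ * W) * (A⁻¹ * S)^(p-1)) = ∞ := by
        rw [h1, ENNReal.mul_top (mul_ne_zero (ENNReal.inv_ne_zero.2 hAt) hW0)]
      rw [h2] at hcubeP
      exact hApt (top_unique hcubeP)
    have hgσ : ∫⁻ y in P, g y ∂μσ = ∫⁻ y in P, F y := by
      rw [hμσ, restrict_withDensity hPm, lintegral_withDensity_eq_lintegral_mul _ hσm hgm]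
      apply lintegral_congr_ae
      filter_upwards [ae_restrict_of_ae hσae] with y hy
      show σ y * g y = F y
      simp only [hgdef]
      calc σ y * (F y * (σ y)⁻¹) = F y * (σ y * (σ y)⁻¹) := by ring
      _ = F y := by rw [ENNReal.mul_inv_cancel (ne_of_gt hy.1.1) (ne_of_lt hy.1.2), mul_one]
    have hμσP : μσ P = S := by rw [hμσ, withDensity_apply σ hPm, hS]
    have hμwP : μw P = W := by rw [hμw, withDensity_apply w hPm, hW]
    set X := dAvg μσ P g with hX
    have hSX : S * X = ∫⁻ y in P, g y ∂μσ := by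
      rw [hX, dAvg, hμσP, ← mul_assoc, ENNReal.mul_inv_cancel hS0 hSt, one_mul]
    have hV : dAvg volume P F = (A⁻¹ * S) * X := by
      rw [dAvg, ← hA, ← hgσ, ← hSX, mul_assoc]
    have bound1 : (A⁻¹ * S)^(p-1) ≤ Ap * (A * W⁻¹) := by
      have haw0 : A⁻¹ * W ≠ 0 := mul_ne_zero (ENNReal.inv_ne_zero.2 hAt) hW0
      have hawt : A⁻¹ * W ≠ ∞ := ENNReal.mul_ne_top (ENNReal.inv_ne_top.2 hA0) hWt
      calc (A⁻¹ * S)^(p-1) = (A⁻¹ * W)⁻¹ * ((A⁻¹ * W) * (A⁻¹ * S)^(p-1)) := by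
            rw [← mul_assoc, ENNReal.inv_mul_cancel haw0 hawt, one_mul]
      _ ≤ (A⁻¹ * W)⁻¹ * Ap := mul_le_mul_right hcubeP _
      _ = Ap * (A * W⁻¹) := by
            rw [ENNReal.mul_inv (Or.inr hWt) (Or.inl (ENNReal.inv_ne_top.2 hA0)), inv_inv,
              mul_comm]
    have bound2 : X^(p-1) * A ≤ ∫⁻ y in P, H y ∂μw := by
      have hHw : ∫⁻ y in P, H y ∂μw = ∫⁻ y in P, w y * H y := by
        rw [hμw, restrict_withDensity hPm, lintegral_withDensity_eq_lintegral_mul _ hw hHm]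
        rfl
      have hptwise : ∀ᵐ y ∂(volume.restrict P), X^(p-1) ≤ w y * H y := by
        filter_upwards [ae_restrict_of_ae hσae, ae_restrict_mem hPm] with y hy hyP
        have hw0 : w y ≠ 0 := ne_of_gt hy.2.1
        have hwt : w y ≠ ∞ := ne_of_lt hy.2.2
        have h1 : (σ y)^((p-1)/p) * (w y)^(-((p-1)/p)) * w y = 1 := alg1 hp hw0 hwt
        have hXle : X ≤ Mσ y := dAvg_le_dyM t μσ g hyP
        calc X^(p-1) = X^(p-1) * ((σ y)^((p-1)/p) * (w y)^(-((p-1)/p)) * w y) := by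
              rw [h1, mul_one]
        _ ≤ (Mσ y)^(p-1) * ((σ y)^((p-1)/p) * (w y)^(-((p-1)/p)) * w y) :=
              mul_le_mul_left (ENNReal.rpow_le_rpow hXle (le_of_lt hp1)) _
        _ = w y * H y := by simp only [hHdef]; ring
      calc X^(p-1) * A = ∫⁻ _y in P, X^(p-1) := by rw [setLIntegral_const, hA]
      _ ≤ ∫⁻ y in P, w y * H y := lintegral_mono_ae hptwise
      _ = ∫⁻ y in P, H y ∂μw := hHw.symm
    have hXbound : X^(p-1) ≤ A⁻¹ * ∫⁻ y in P, H y ∂μw := by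
      calc X^(p-1) = A⁻¹ * (X^(p-1) * A) := by
            rw [mul_comm (X^(p-1)) A, ← mul_assoc, ENNReal.inv_mul_cancel hA0 hAt, one_mul]
      _ ≤ A⁻¹ * ∫⁻ y in P, H y ∂μw := mul_le_mul_right bound2 _
    calc (dAvg volume P F)^(p-1) = ((A⁻¹ * S) * X)^(p-1) := by rw [hV]
    _ = (A⁻¹ * S)^(p-1) * X^(p-1) := ENNReal.mul_rpow_of_nonneg _ _ (le_of_lt hp1)
    _ ≤ (Ap * (A * W⁻¹)) * (A⁻¹ * ∫⁻ y in P, H y ∂μw) := mul_le_mul' bound1 hXbound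
    _ = Ap * (W⁻¹ * ∫⁻ y in P, H y ∂μw) * (A * A⁻¹) := by ring
    _ = Ap * dAvg μw P H := by
          rw [ENNReal.mul_inv_cancel hA0 hAt, mul_one, dAvg, hμwP]
    _ ≤ Ap * dyM t μw H x := mul_le_mul_right (dAvg_le_dyM t μw H hx) _
  -- integral chain
  have hxp : ∀ y : ℝ≥0∞, y^p = (y^(p-1))^(p/(p-1)) := by
    intro y
    rw [← ENNReal.rpow_mul, hpp']
  have hApp' : Ap^(p/(p-1)) ≠ ∞ := ENNReal.rpow_ne_top_of_nonneg (le_of_lt hp'0) hApt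
  have hHp' : ∫⁻ x, (H x)^(p/(p-1)) ∂μw = ∫⁻ x, (Mσ x)^p ∂μσ := by
    rw [hμw, lintegral_withDensity_eq_lintegral_mul _ hw (hHm.pow_const _),
      hμσ, lintegral_withDensity_eq_lintegral_mul _ hσm (hMσm.pow_const _)]
    apply lintegral_congr_ae
    filter_upwards [hσae] with y hy
    have hw0 : w y ≠ 0 := ne_of_gt hy.2.1
    have hwt : w y ≠ ∞ := ne_of_lt hy.2.2
    show w y * (H y)^(p/(p-1)) = σ y * (Mσ y)^p
    exact alg2 hp hw0 hwt
  have hgp : ∫⁻ x, (g x)^p ∂μσ = ∫⁻ x, F x ^ p * w x := by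
    rw [hμσ, lintegral_withDensity_eq_lintegral_mul _ hσm (hgm.pow_const _)]
    apply lintegral_congr_ae
    filter_upwards [hσae] with y hy
    have hw0 : w y ≠ 0 := ne_of_gt hy.2.1
    have hwt : w y ≠ ∞ := ne_of_lt hy.2.2
    show σ y * (g y)^p = F y ^ p * w y
    exact alg3 hp hw0 hwt
  calc ∫⁻ x, (dyM t volume F x)^p * w x
      = ∫⁻ x, ((dyM t volume F x)^(p-1))^(p/(p-1)) * w x := by
        apply lintegral_congr; intro x; rw [← hxp]
  _ ≤ ∫⁻ x, (Ap * dyM t μw H x)^(p/(p-1)) * w x := by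
        apply lintegral_mono; intro x
        exact mul_le_mul_left (ENNReal.rpow_le_rpow (step1 x) (le_of_lt hp'0)) _
  _ = Ap^(p/(p-1)) * ∫⁻ x, (dyM t μw H x)^(p/(p-1)) * w x := by
        rw [← lintegral_const_mul' _ _ hApp']
        apply lintegral_congr; intro x
        rw [ENNReal.mul_rpow_of_nonneg _ _ (le_of_lt hp'0), mul_assoc]
  _ = Ap^(p/(p-1)) * ∫⁻ x, (dyM t μw H x)^(p/(p-1)) ∂μw := by
        congr 1
        rw [hμw, lintegral_withDensity_eq_lintegral_mul _ hw ((measurable_dyM t μw H).pow_const _)]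
        apply lintegral_congr; intro x
        exact (mul_comm _ _)
  _ ≤ Ap^(p/(p-1)) * (Cp' * ∫⁻ x, (H x)^(p/(p-1)) ∂μw) :=
        mul_le_mul_right (hCp' t μw H hHm) _
  _ = Ap^(p/(p-1)) * Cp' * ∫⁻ x, (Mσ x)^p ∂μσ := by rw [hHp', mul_assoc]
  _ ≤ Ap^(p/(p-1)) * Cp' * (Cp * ∫⁻ x, (g x)^p ∂μσ) :=
        mul_le_mul_right (hCp t μσ g hgm) _
  _ = (Cp' * Cp) * Ap^(p/(p-1)) * ∫⁻ x, F x ^ p * w x := by rw [hgp]; ring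

end Lerner

----------------------------------------------------------------
-- cube basics
----------------------------------------------------------------
noncomputable section Assembly
variable {n : ℕ}
local notation "α" => (Fin n → ℝ)

lemma cube_eq_pi (a : Fin n → ℝ) (h : ℝ) :
    {y : α | ∀ i, y i ∈ Set.Icc (a i) (a i + h)} = Set.univ.pi (fun i => Set.Icc (a i) (a i + h)) := by
  ext y
  simp only [Set.mem_setOf_eq, Set.mem_pi, Set.mem_univ, true_implies]

lemma volume_cube (a : Fin n → ℝ) (h : ℝ) :
    volume {y : α | ∀ i, y i ∈ Set.Icc (a i) (a i + h)} = (ENNReal.ofReal h)^n := by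
  rw [cube_eq_pi, volume_pi_pi]
  simp [Real.volume_Icc]

lemma measurableSet_cube (a : Fin n → ℝ) (h : ℝ) :
    MeasurableSet {y : α | ∀ i, y i ∈ Set.Icc (a i) (a i + h)} := by
  rw [cube_eq_pi]
  exact MeasurableSet.univ_pi (fun i => measurableSet_Icc)

/-- the closure cube of a dyadic cube: same integrals -/
lemma dC_closure (t : Fin n → ℤ) (k : ℤ) (m : Fin n → ℤ) :
    ∃ Q : Set α, IsCube n Q ∧ dC t k m ⊆ Q ∧ volume Q = volume (dC t k m) ∧
      (∀ u : α → ℝ≥0∞, ∫⁻ y in Q, u y = ∫⁻ y in dC t k m, u y) := by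
  set a : Fin n → ℝ := fun i => dL (t i) k (m i) with ha
  set Q : Set α := {y | ∀ i, y i ∈ Set.Icc (a i) (a i + 2^k)} with hQ
  have hcube : IsCube n Q := ⟨a, 2^k, two_zpow_pos k, rfl⟩
  have hsub : dC t k m ⊆ Q := by
    intro y hy i
    have := hy i (Set.mem_univ i)
    simp only [dI, Set.mem_Ico] at this
    exact ⟨this.1, le_of_lt this.2⟩
  have hvol : volume Q = volume (dC t k m) := by
    rw [hQ, volume_cube, volume_dC]
  have hne : volume (Q \ dC t k m) = 0 := by
    rw [measure_diff hsub (measurableSet_dC t k m).nullMeasurableSet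
      (ne_of_lt (volume_dC_lt_top t k m)), hvol, tsub_self]
  have hae : dC t k m =ᵐ[volume] Q := by
    rw [ae_eq_set]
    constructor
    · rw [Set.diff_eq_empty.2 hsub]; exact measure_empty
    · exact hne
  exact ⟨Q, hcube, hsub, hvol, fun u => (setLIntegral_congr hae).symm⟩

/-- local integrability of a weight on dyadic cubes -/
lemma weight_int_dC {w : α → ℝ≥0∞} (hw : IsWeight n w) (t : Fin n → ℤ) (k : ℤ) (m : Fin n → ℤ) :
    (∫⁻ y in dC t k m, w y) < ∞ := by
  obtain ⟨Q, hQ, _, _, hint⟩ := dC_closure t k m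
  rw [← hint w]
  exact hw.2 Q hQ

/-- the A_p bound on dyadic cubes -/
lemma ap_dC {w : α → ℝ≥0∞} {p : ℝ} (t : Fin n → ℤ) (k : ℤ) (m : Fin n → ℤ) :
    ((volume (dC t k m))⁻¹ * ∫⁻ y in dC t k m, w y) *
      ((volume (dC t k m))⁻¹ * ∫⁻ y in dC t k m, (w y)^(1 - p/(p-1)))^(p-1)
    ≤ ApConst n p w := by
  obtain ⟨Q, hQ, _, hvol, hint⟩ := dC_closure t k m
  have h1 : setAvg n Q w = (volume (dC t k m))⁻¹ * ∫⁻ y in dC t k m, w y := by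
    rw [setAvg, hvol, hint w]
  have h2 : setAvg n Q (fun y => (w y)^(1 - p/(p-1)))
      = (volume (dC t k m))⁻¹ * ∫⁻ y in dC t k m, (w y)^(1 - p/(p-1)) := by
    rw [setAvg, hvol, hint (fun y => (w y)^(1 - p/(p-1)))]
  rw [← h1, ← h2]
  exact le_iSup₂ (f := fun (Q : Set α) (_ : IsCube n Q) =>
    setAvg n Q w * (setAvg n Q fun y => w y ^ (1 - p / (p - 1))) ^ (p - 1)) Q hQ

end Assembly

noncomputable section Assembly2
variable {n : ℕ}
local notation "α" => (Fin n → ℝ)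

lemma le_HLM {F : α → ℝ≥0∞} {Q : Set α} (hQ : IsCube n Q) {x : α} (hx : x ∈ Q) :
    setAvg n Q F ≤ HLM n F x := by
  rw [HLM]
  refine le_trans ?_ (le_iSup _ Q)
  refine le_trans ?_ (le_iSup _ hQ)
  exact le_iSup_iff.mpr fun b hb => hb hx

lemma measurable_HLM (F : α → ℝ≥0∞) : Measurable (HLM n F) := by
  apply LowerSemicontinuous.measurable
  intro x c hc
  rw [HLM] at hc
  rw [gt_iff_lt, lt_iSup_iff] at hc
  obtain ⟨Q, hc⟩ := hc
  rw [lt_iSup_iff] at hc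
  obtain ⟨hQcube, hc⟩ := hc
  rw [lt_iSup_iff] at hc
  obtain ⟨hxQ, hc⟩ := hc
  obtain ⟨a, h, hh, rfl⟩ := hQcube
  set Q := {y : α | ∀ i, y i ∈ Set.Icc (a i) (a i + h)} with hQdef
  set I := ∫⁻ y in Q, F y with hI
  have hcI : c < ((ENNReal.ofReal h)^n)⁻¹ * I := by
    rw [setAvg, ← hI, volume_cube] at hc
    exact hc
  -- find a good ε > 0
  have hkey : ∃ ε : ℝ, 0 < ε ∧ c < ((ENNReal.ofReal (h + 2*ε))^n)⁻¹ * I := by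
    by_cases hItop : I = ∞
    · refine ⟨1, one_pos, ?_⟩
      rw [hItop, ENNReal.mul_top ?h0]
      · exact lt_of_lt_of_le hc le_top
      · refine ENNReal.inv_ne_zero.2 ?_
        exact ENNReal.pow_ne_top ENNReal.ofReal_ne_top
    · have htend : Tendsto (fun j : ℕ => ((ENNReal.ofReal (h + 2*(1/(j+1))))^n)⁻¹ * I)
          atTop (𝓝 (((ENNReal.ofReal h)^n)⁻¹ * I)) := by
        have t1 : Tendsto (fun j : ℕ => h + 2*(1/((j:ℝ)+1))) atTop (𝓝 h) := by
          have := tendsto_one_div_add_atTop_nhds_zero_nat (𝕜 := ℝ)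
          have t2 := this.const_mul (2:ℝ)
          have t3 := t2.const_add h
          simpa using t3
        have t4 : Tendsto (fun j : ℕ => ((ENNReal.ofReal (h + 2*(1/((j:ℝ)+1))))^n)⁻¹)
            atTop (𝓝 (((ENNReal.ofReal h)^n)⁻¹)) := by
          apply ENNReal.tendsto_inv_iff.2
          exact ((ENNReal.continuous_pow n).tendsto _).comp
            ((ENNReal.continuous_ofReal.tendsto _).comp t1)
        exact ENNReal.Tendsto.mul_const t4 (Or.inr hItop)
      have hev := htend.eventually_const_lt hcI
      obtain ⟨j, hj⟩ := hev.exists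
      exact ⟨1/(j+1), by positivity, hj⟩
  obtain ⟨ε, hε, hcε⟩ := hkey
  -- the enlarged cube
  set Q' := {y : α | ∀ i, y i ∈ Set.Icc (a i - ε) ((a i - ε) + (h + 2*ε))} with hQ'def
  have hQ'cube : IsCube n Q' := ⟨fun i => a i - ε, h + 2*ε, by linarith, rfl⟩
  have hQQ' : Q ⊆ Q' := by
    intro y hy i
    have := hy i
    simp only [Set.mem_Icc] at this ⊢
    constructor <;> [linarith [this.1]; linarith [this.2]]
  filter_upwards [Metric.ball_mem_nhds x hε] with x' hx'
  have hx'Q' : x' ∈ Q' := by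
    intro i
    have hd : |x' i - x i| < ε := by
      have h1 := dist_le_pi_dist x' x i
      rw [Real.dist_eq] at h1
      exact lt_of_le_of_lt h1 (Metric.mem_ball.1 hx')
    have h2 := hxQ i
    simp only [Set.mem_Icc] at h2 ⊢
    rw [abs_lt] at hd
    constructor <;> [linarith [h2.1]; linarith [h2.2]]
  calc c < ((ENNReal.ofReal (h + 2*ε))^n)⁻¹ * I := hcε
  _ ≤ setAvg n Q' F := by
      rw [setAvg, hQ'def, volume_cube]
      exact mul_le_mul_right (lintegral_mono_set hQQ') _
  _ ≤ HLM n F x' := le_HLM hQ'cube hx'Q'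

/-- comparison of HLM with the dyadic maximal functions over the 3^n grids -/
lemma HLM_le_dyM (F : α → ℝ≥0∞) (x : α) :
    HLM n F x ≤ ((6:ℝ≥0∞))^n * ⨆ t : Fin n → Fin 3, dyM (fun i => ((t i : ℕ) : ℤ)) volume F x := by
  rw [HLM]
  apply iSup_le; intro Q; apply iSup_le; intro hQcube; apply iSup_le; intro hxQ
  obtain ⟨a, h, hh, rfl⟩ := hQcube
  set Q := {y : α | ∀ i, y i ∈ Set.Icc (a i) (a i + h)} with hQdef
  obtain ⟨t, k, m, htb, hsub, hk6⟩ := dC_cover (a := a) hh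
  set t' : Fin n → Fin 3 := fun i => ⟨(t i).toNat, by have := htb i; omega⟩ with ht'
  have ht'eq : (fun i => ((t' i : ℕ) : ℤ)) = t := by
    funext i
    simp only [ht']
    exact Int.toNat_of_nonneg (htb i).1
  have hP0 : volume (dC t k m) ≠ 0 := ne_of_gt (volume_dC_pos t k m)
  have hPt : volume (dC t k m) ≠ ∞ := ne_of_lt (volume_dC_lt_top t k m)
  have hQvol : volume Q = (ENNReal.ofReal h)^n := volume_cube a h
  have hQ0 : volume Q ≠ 0 := by
    rw [hQvol]
    exact pow_ne_zero n (by simp [ENNReal.ofReal_pos, hh])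
  have hQt : volume Q ≠ ∞ := by
    rw [hQvol]
    exact ENNReal.pow_ne_top ENNReal.ofReal_ne_top
  have hPvol : volume (dC t k m) ≤ (6:ℝ≥0∞)^n * volume Q := by
    rw [volume_dC, hQvol, ← mul_pow]
    apply pow_le_pow_left' ?_ n
    calc ENNReal.ofReal ((2:ℝ)^k) ≤ ENNReal.ofReal (6*h) := ENNReal.ofReal_le_ofReal hk6
    _ = ENNReal.ofReal 6 * ENNReal.ofReal h := ENNReal.ofReal_mul (by norm_num)
    _ = 6 * ENNReal.ofReal h := by norm_num
  calc setAvg n Q F = (volume Q)⁻¹ * ∫⁻ y in Q, F y := rfl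
  _ ≤ (volume Q)⁻¹ * ∫⁻ y in dC t k m, F y := mul_le_mul_right (lintegral_mono_set hsub) _
  _ = ((volume Q)⁻¹ * volume (dC t k m)) * dAvg volume (dC t k m) F := by
      have hid : volume (dC t k m) * dAvg volume (dC t k m) F = ∫⁻ y in dC t k m, F y := by
        rw [dAvg, ← mul_assoc, ENNReal.mul_inv_cancel hP0 hPt, one_mul]
      rw [← hid, ← mul_assoc]
  _ ≤ (6:ℝ≥0∞)^n * dAvg volume (dC t k m) F := by
      apply mul_le_mul_left
      calc (volume Q)⁻¹ * volume (dC t k m)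
          ≤ (volume Q)⁻¹ * ((6:ℝ≥0∞)^n * volume Q) := mul_le_mul_right hPvol _
      _ = (6:ℝ≥0∞)^n * ((volume Q)⁻¹ * volume Q) := by ring
      _ = (6:ℝ≥0∞)^n := by rw [ENNReal.inv_mul_cancel hQ0 hQt, mul_one]
  _ ≤ (6:ℝ≥0∞)^n * ⨆ t'' : Fin n → Fin 3, dyM (fun i => ((t'' i : ℕ) : ℤ)) volume F x := by
      apply mul_le_mul_right
      calc dAvg volume (dC t k m) F ≤ dyM t volume F x := dAvg_le_dyM t volume F (hsub hxQ)
      _ = dyM (fun i => ((t' i : ℕ) : ℤ)) volume F x := by rw [ht'eq]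
      _ ≤ _ := le_iSup (fun t'' : Fin n → Fin 3 => dyM (fun i => ((t'' i : ℕ) : ℤ)) volume F x) t'
end Assembly2

noncomputable section Assembly3
variable {n : ℕ}
local notation "α" => (Fin n → ℝ)

def bigCube (j : ℕ) : Set α :=
  {y | ∀ i, y i ∈ Set.Icc (-((j:ℝ)+1)) ((-((j:ℝ)+1)) + 2*((j:ℝ)+1))}

lemma bigCube_isCube (j : ℕ) : IsCube n (bigCube j) :=
  ⟨fun _ => -((j:ℝ)+1), 2*((j:ℝ)+1), by positivity, rfl⟩

lemma bigCube_meas (j : ℕ) : MeasurableSet (bigCube (n := n) j) :=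
  measurableSet_cube _ _

lemma bigCube_mono {j j' : ℕ} (h : j ≤ j') : bigCube (n := n) j ⊆ bigCube j' := by
  intro y hy i
  have := hy i
  simp only [Set.mem_Icc] at this ⊢
  have hc : (j:ℝ) ≤ (j':ℝ) := by exact_mod_cast h
  constructor <;> [linarith [this.1]; linarith [this.2]]

lemma bigCube_cover (y : α) : ∃ j : ℕ, y ∈ bigCube j := by
  obtain ⟨j, hj⟩ := exists_nat_ge ‖y‖
  refine ⟨j, fun i => ?_⟩
  have h1 : |y i| ≤ ‖y‖ := by
    rw [← Real.norm_eq_abs]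
    exact norm_le_pi_norm y i
  rw [abs_le] at h1
  simp only [Set.mem_Icc]
  constructor <;> [linarith [h1.1]; linarith [h1.2]]

lemma exists_bigCube_pos {S : Set α} (h : volume S ≠ 0) :
    ∃ j, volume (S ∩ bigCube j) ≠ 0 := by
  by_contra hcon
  push_neg at hcon
  apply h
  have hcov : S = ⋃ j : ℕ, S ∩ bigCube j := by
    ext y
    simp only [Set.mem_iUnion, Set.mem_inter_iff]
    constructor
    · intro hy
      obtain ⟨j, hj⟩ := bigCube_cover y
      exact ⟨j, hy, hj⟩
    · rintro ⟨j, hy, _⟩; exact hy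
  rw [hcov]
  refine le_antisymm (le_trans (measure_iUnion_le _) ?_) (zero_le)
  simp [hcon]

lemma setLintegral_top {u : α → ℝ≥0∞} (hu : Measurable u) {T : Set α}
    (hT : volume T ≠ 0) (htop : ∀ y ∈ T, u y = ∞) : (∫⁻ y in T, u y) = ∞ := by
  have h1 : (∞ : ℝ≥0∞) * volume T ≤ ∫⁻ y in T, u y := by
    rw [← setLIntegral_const T ∞]
    exact setLIntegral_mono hu (fun y hy => le_of_eq (htop y hy).symm)
  rw [ENNReal.top_mul hT] at h1
  exact top_unique h1

lemma weight_ae_lt_top {w : α → ℝ≥0∞} (hw : IsWeight n w) : ∀ᵐ y, w y < ∞ := by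
  rw [ae_iff]
  have hsub : {y : α | ¬ w y < ∞} ⊆ ⋃ j : ℕ, {y | w y = ∞} ∩ bigCube j := by
    intro y hy
    simp only [Set.mem_setOf_eq, not_lt, top_le_iff] at hy
    obtain ⟨j, hj⟩ := bigCube_cover y
    exact Set.mem_iUnion.2 ⟨j, hy, hj⟩
  refine measure_mono_null hsub ?_
  refine le_antisymm (le_trans (measure_iUnion_le _) ?_) (zero_le)
  have hj0 : ∀ j : ℕ, volume ({y : α | w y = ∞} ∩ bigCube j) = 0 := by
    intro j
    by_contra hj
    have h1 : (∫⁻ y in {y : α | w y = ∞} ∩ bigCube j, w y) = ∞ :=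
      setLintegral_top hw.1 hj (fun y hy => hy.1)
    have h2 : (∫⁻ y in bigCube j, w y) < ∞ := hw.2 _ (bigCube_isCube j)
    have h3 : (∫⁻ y in {y : α | w y = ∞} ∩ bigCube j, w y) ≤ ∫⁻ y in bigCube j, w y :=
      lintegral_mono_set Set.inter_subset_right
    rw [h1] at h3
    exact absurd (top_unique h3) (ne_of_lt h2)
  simp [hj0]

lemma weight_pos_or_zero {w : α → ℝ≥0∞} {p : ℝ} (hp : 1 < p) (hw : IsWeight n w)
    (hAp : ApConst n p w < ∞) : (∀ᵐ y, w y = 0) ∨ (∀ᵐ y, 0 < w y) := by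
  have hp1 : (0:ℝ) < p - 1 := by linarith
  have he : (1 - p/(p-1)) < 0 := by
    have : 1 < p/(p-1) := by rw [lt_div_iff₀ hp1]; linarith
    linarith
  by_cases hz : volume {y : α | w y ≠ 0} = 0
  · left
    rw [ae_iff]
    simpa using hz
  · right
    rw [ae_iff]
    have hset : {y : α | ¬ 0 < w y} = {y : α | w y = 0} := by
      ext y; simp [pos_iff_ne_zero]
    rw [hset]
    by_contra hz0
    obtain ⟨j1, hj1⟩ := exists_bigCube_pos (S := {y : α | w y ≠ 0}) hz
    obtain ⟨j2, hj2⟩ := exists_bigCube_pos (S := {y : α | w y = 0}) hz0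
    set j := max j1 j2 with hj
    set Q := bigCube (n := n) j with hQ
    have hQ1 : volume ({y : α | w y ≠ 0} ∩ Q) ≠ 0 := by
      intro hcon
      exact hj1 (le_antisymm (le_trans (measure_mono
        (Set.inter_subset_inter_right _ (bigCube_mono (le_max_left j1 j2)))) hcon.le) (zero_le))
    have hQ2 : volume ({y : α | w y = 0} ∩ Q) ≠ 0 := by
      intro hcon
      exact hj2 (le_antisymm (le_trans (measure_mono
        (Set.inter_subset_inter_right _ (bigCube_mono (le_max_right j1 j2)))) hcon.le) (zero_le))
    have hvolQ0 : volume Q ≠ 0 := by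
      intro hcon
      exact hQ1 (le_antisymm (le_trans (measure_mono Set.inter_subset_right) hcon.le) (zero_le))
    have hvolQt : volume Q ≠ ∞ := by
      rw [hQ, bigCube, volume_cube]
      exact ENNReal.pow_ne_top ENNReal.ofReal_ne_top
    -- ∫_Q w ≠ 0
    have hintw : (∫⁻ y in Q, w y) ≠ 0 := by
      have h1 : (0:ℝ≥0∞) < ∫⁻ y in Q, w y := by
        rw [lintegral_pos_iff_support hw.1]
        have : volume.restrict Q (Function.support w) = volume ({y : α | w y ≠ 0} ∩ Q) := by
          rw [Measure.restrict_apply]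
          · rfl
          · have : Function.support w = w ⁻¹' ({0}ᶜ) := rfl
            rw [this]
            exact hw.1 (measurableSet_singleton 0).compl
        rw [this]
        exact pos_iff_ne_zero.2 hQ1
      exact ne_of_gt h1
    -- ∫_Q σ = ∞
    have hintσ : (∫⁻ y in Q, (w y)^(1 - p/(p-1))) = ∞ := by
      have h1 : (∫⁻ y in {y : α | w y = 0} ∩ Q, (w y)^(1 - p/(p-1))) = ∞ := by
        apply setLintegral_top (hw.1.pow_const _) hQ2
        intro y hy
        have : w y = 0 := hy.1
        rw [this, ENNReal.zero_rpow_of_neg he]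
      exact top_unique (h1 ▸ lintegral_mono_set Set.inter_subset_right)
    have hbound : setAvg n Q w * (setAvg n Q fun y => w y ^ (1 - p / (p - 1))) ^ (p - 1)
        ≤ ApConst n p w :=
      le_iSup₂ (f := fun (Q : Set α) (_ : IsCube n Q) =>
        setAvg n Q w * (setAvg n Q fun y => w y ^ (1 - p / (p - 1))) ^ (p - 1)) Q
        (bigCube_isCube j)
    have htop : setAvg n Q w * (setAvg n Q fun y => w y ^ (1 - p / (p - 1))) ^ (p - 1) = ∞ := by
      rw [setAvg, setAvg, hintσ, ENNReal.mul_top (ENNReal.inv_ne_zero.2 hvolQt),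
        ENNReal.top_rpow_of_pos hp1, ENNReal.mul_top]
      exact mul_ne_zero (ENNReal.inv_ne_zero.2 hvolQt) hintw
    rw [htop] at hbound
    exact absurd (top_unique hbound) (ne_of_lt hAp)

end Assembly3

noncomputable section Assembly4
variable {n : ℕ}
local notation "α" => (Fin n → ℝ)

theorem single_step (hn : 1 ≤ n) {p : ℝ} (hp : 1 < p) :
    ∃ c₁ : ℝ≥0∞, 0 < c₁ ∧ c₁ < ∞ ∧ ∀ w : α → ℝ≥0∞, IsWeight n w → ApConst n p w < ∞ →
      ∀ F : α → ℝ≥0∞, Measurable F →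
        ∫⁻ x, (HLM n F x)^p * w x
          ≤ c₁ * (ApConst n p w)^(p/(p-1)) * ∫⁻ x, F x^p * w x := by
  have hp0 : (0:ℝ) < p := by linarith
  obtain ⟨CL, hCL0, hCLt, hCL⟩ := lerner_grid hn hp
  set c6 : ℝ≥0∞ := ((6:ℝ≥0∞)^n)^p with hc6
  have h6ne0 : ((6:ℝ≥0∞)^n) ≠ 0 := pow_ne_zero n (by norm_num)
  have h6net : ((6:ℝ≥0∞)^n) ≠ ∞ := ENNReal.pow_ne_top (by norm_num)
  have hc60 : c6 ≠ 0 := rpow_ne_zero' h6ne0 h6net p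
  have hc6t : c6 ≠ ∞ := rpow_ne_top' h6ne0 h6net p
  have h3ne0 : ((3:ℝ≥0∞)^n) ≠ 0 := pow_ne_zero n (by norm_num)
  have h3net : ((3:ℝ≥0∞)^n) ≠ ∞ := ENNReal.pow_ne_top (by norm_num)
  refine ⟨c6 * (3:ℝ≥0∞)^n * CL, ?_, ?_, ?_⟩
  · exact ENNReal.mul_pos (mul_ne_zero hc60 h3ne0) (ne_of_gt hCL0)
  · exact ENNReal.mul_lt_top (ENNReal.mul_lt_top hc6t.lt_top h3net.lt_top) hCLt
  intro w hwIs hAp F hF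
  rcases weight_pos_or_zero hp hwIs hAp with hz | hpos
  · have hzero : ∫⁻ x, (HLM n F x)^p * w x = 0 := by
      rw [← lintegral_zero]
      apply lintegral_congr_ae
      filter_upwards [hz] with x hx
      rw [hx, mul_zero]
    rw [hzero]
    exact zero_le
  · have hwlt := weight_ae_lt_top hwIs
    have happ : ∀ t : Fin n → Fin 3,
        ∫⁻ x, (dyM (fun i => ((t i : ℕ) : ℤ)) volume F x)^p * w x
          ≤ CL * (ApConst n p w)^(p/(p-1)) * ∫⁻ x, F x^p * w x := by
      intro t
      exact hCL (fun i => ((t i : ℕ) : ℤ)) w hwIs.1 hpos hwlt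
        (fun k m => weight_int_dC hwIs _ k m) (ApConst n p w) (ne_of_lt hAp)
        (fun k m => ap_dC _ k m) F hF
    have hpt : ∀ x, (HLM n F x)^p * w x
        ≤ c6 * ∑ t : Fin n → Fin 3, ((dyM (fun i => ((t i : ℕ) : ℤ)) volume F x)^p * w x) := by
      intro x
      have h1 := HLM_le_dyM F x
      have h2 : (HLM n F x)^p
          ≤ c6 * ⨆ t : Fin n → Fin 3, (dyM (fun i => ((t i : ℕ) : ℤ)) volume F x)^p := by
        calc (HLM n F x)^p
            ≤ (((6:ℝ≥0∞))^n * ⨆ t : Fin n → Fin 3, dyM (fun i => ((t i : ℕ) : ℤ)) volume F x)^p :=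
              ENNReal.rpow_le_rpow h1 (le_of_lt hp0)
        _ = c6 * (⨆ t : Fin n → Fin 3, dyM (fun i => ((t i : ℕ) : ℤ)) volume F x)^p :=
              ENNReal.mul_rpow_of_nonneg _ _ (le_of_lt hp0)
        _ = c6 * ⨆ t : Fin n → Fin 3, (dyM (fun i => ((t i : ℕ) : ℤ)) volume F x)^p := by
              rw [rpow_iSup _ hp0]
      have h3 : (⨆ t : Fin n → Fin 3, (dyM (fun i => ((t i : ℕ) : ℤ)) volume F x)^p)
          ≤ ∑ t : Fin n → Fin 3, (dyM (fun i => ((t i : ℕ) : ℤ)) volume F x)^p := by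
        apply iSup_le
        intro t
        exact Finset.single_le_sum
          (f := fun t : Fin n → Fin 3 => (dyM (fun i => ((t i : ℕ) : ℤ)) volume F x)^p)
          (fun _ _ => zero_le) (Finset.mem_univ t)
      calc (HLM n F x)^p * w x
          ≤ (c6 * ∑ t : Fin n → Fin 3, (dyM (fun i => ((t i : ℕ) : ℤ)) volume F x)^p) * w x :=
            mul_le_mul_left (le_trans h2 (mul_le_mul_right h3 _)) _
      _ = c6 * ∑ t : Fin n → Fin 3, ((dyM (fun i => ((t i : ℕ) : ℤ)) volume F x)^p * w x) := by
            rw [mul_assoc, Finset.sum_mul]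
    calc ∫⁻ x, (HLM n F x)^p * w x
        ≤ ∫⁻ x, c6 * ∑ t : Fin n → Fin 3, ((dyM (fun i => ((t i : ℕ) : ℤ)) volume F x)^p * w x) :=
          lintegral_mono hpt
    _ = c6 * ∑ t : Fin n → Fin 3, ∫⁻ x, ((dyM (fun i => ((t i : ℕ) : ℤ)) volume F x)^p * w x) := by
          rw [lintegral_const_mul' _ _ hc6t]
          congr 1
          apply lintegral_finset_sum
          intro t _
          exact ((measurable_dyM _ _ _).pow_const _).mul hwIs.1
    _ ≤ c6 * ∑ _t : Fin n → Fin 3, (CL * (ApConst n p w)^(p/(p-1)) * ∫⁻ x, F x^p * w x) := by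
          apply mul_le_mul_right
          apply Finset.sum_le_sum
          intro t _
          exact happ t
    _ = c6 * ((3:ℝ≥0∞)^n * (CL * (ApConst n p w)^(p/(p-1)) * ∫⁻ x, F x^p * w x)) := by
          rw [Finset.sum_const, nsmul_eq_mul]
          congr 2
          rw [Finset.card_univ, Fintype.card_fun]
          simp
    _ = c6 * (3:ℝ≥0∞)^n * CL * (ApConst n p w)^(p/(p-1)) * ∫⁻ x, F x^p * w x := by ring

end Assembly4


/-- weighted bound for the iterated Hardy–Littlewood maximal operator:
`‖M^k f‖_{L^p(w)} ≤ c [w]_{A_p}^{k/(p−1)} ‖f‖_{L^p(w)}`. -/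
theorem statement8 (n : ℕ) (hn : 1 ≤ n) (k : ℕ) (hk : 1 ≤ k) (p : ℝ) (hp : 1 < p) :
    ∃ c : ℝ≥0∞, 0 < c ∧ c < ∞ ∧
      ∀ w : (Fin n → ℝ) → ℝ≥0∞, IsWeight n w → ApConst n p w < ∞ →
        ∀ f : (Fin n → ℝ) → ℝ, Measurable f → wLpNorm n p w f < ∞ →
          wLpNormE n p w ((HLM n)^[k] fun y => (‖f y‖₊ : ℝ≥0∞)) ≤
            c * ApConst n p w ^ ((k : ℝ) / (p - 1)) * wLpNorm n p w f := by
  have hp0 : (0:ℝ) < p := by linarith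
  have hp1 : (0:ℝ) < p - 1 := by linarith
  obtain ⟨c₁, hc₁0, hc₁t, hc₁⟩ := single_step hn hp
  refine ⟨c₁ ^ ((k:ℝ)/p), ?_, ?_, ?_⟩
  · exact ENNReal.rpow_pos hc₁0 (ne_of_lt hc₁t)
  · exact (rpow_ne_top' (ne_of_gt hc₁0) (ne_of_lt hc₁t) _).lt_top
  intro w hwIs hAp f hf _hfin
  set F₀ : (Fin n → ℝ) → ℝ≥0∞ := fun y => (‖f y‖₊ : ℝ≥0∞) with hF₀
  have hF₀m : Measurable F₀ := measurable_coe_nnreal_ennreal.comp hf.nnnorm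
  set Ap := ApConst n p w with hApdef
  set B := c₁ * Ap^(p/(p-1)) with hB
  set I₀ := ∫⁻ x, (F₀ x)^p * w x with hI₀
  have hiter : ∀ j : ℕ, Measurable ((HLM n)^[j] F₀) ∧
      ∫⁻ x, (((HLM n)^[j] F₀) x)^p * w x ≤ B^j * I₀ := by
    intro j
    induction j with
    | zero => exact ⟨hF₀m, by simp [hI₀]⟩
    | succ j ih =>
      constructor
      · rw [Function.iterate_succ_apply']
        exact measurable_HLM _
      · rw [Function.iterate_succ_apply']
        calc ∫⁻ x, (HLM n ((HLM n)^[j] F₀) x)^p * w x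
            ≤ c₁ * Ap^(p/(p-1)) * ∫⁻ x, (((HLM n)^[j] F₀) x)^p * w x :=
              hc₁ w hwIs hAp _ ih.1
        _ = B * ∫⁻ x, (((HLM n)^[j] F₀) x)^p * w x := by rw [hB]
        _ ≤ B * (B^j * I₀) := mul_le_mul_right ih.2 _
        _ = B^(j+1) * I₀ := by rw [← mul_assoc, ← pow_succ']
  have hfinal := (hiter k).2
  have halg : (B^k * I₀)^(1/p)
      = c₁ ^ ((k:ℝ)/p) * Ap ^ ((k:ℝ)/(p-1)) * I₀^(1/p) := by
    rw [hB, mul_pow, ENNReal.mul_rpow_of_nonneg _ _ (by positivity : (0:ℝ) ≤ 1/p),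
      ENNReal.mul_rpow_of_nonneg _ _ (by positivity : (0:ℝ) ≤ 1/p)]
    congr 1
    congr 1
    · rw [← ENNReal.rpow_natCast c₁ k, ← ENNReal.rpow_mul]
      congr 1
      field_simp
    · rw [← ENNReal.rpow_natCast (Ap^(p/(p-1))) k, ← ENNReal.rpow_mul, ← ENNReal.rpow_mul]
      congr 1
      field_simp
  calc wLpNormE n p w ((HLM n)^[k] F₀)
      = (∫⁻ x, (((HLM n)^[k] F₀) x)^p * w x)^(1/p) := rfl
  _ ≤ (B^k * I₀)^(1/p) := ENNReal.rpow_le_rpow hfinal (by positivity)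
  _ = c₁ ^ ((k:ℝ)/p) * Ap ^ ((k:ℝ)/(p-1)) * I₀^(1/p) := halg
  _ = c₁ ^ ((k:ℝ)/p) * ApConst n p w ^ ((k : ℝ) / (p - 1)) * wLpNorm n p w f := rfl
end

section
/- Let n ≥ 1 and λ ≥ 0. There is a constant c = c(n,λ) such that for every weight w on ℝ^n, every t > 0 and every nonnegative measurable f, one has the Fefferman–Stein type inequality w({x ∈ ℝ^n : M_{Φ_λ}f(x) > t}) ≤ c ∫_{ℝ^n} Φ_λ(f(x)/t) Mw(x) dx, where w(E) = ∫_E w dx. -/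
open MeasureTheory Filter
open scoped ENNReal NNReal

/-- The Young function `Φ_λ(t) = t (log(e+t))^λ`. -/
noncomputable def PhiLam (lam t : ℝ) : ℝ := t * Real.log (Real.exp 1 + t) ^ lam

/-- Localized Luxemburg norm `‖f‖_{Φ_λ,Q}` over a cube `Q`. -/
noncomputable def luxNorm (n : ℕ) (lam : ℝ) (Q : Set (Fin n → ℝ))
    (f : (Fin n → ℝ) → ℝ) : ℝ≥0∞ :=
  ⨅ (t : ℝ) (_ : 0 < t)
    (_ : (volume Q)⁻¹ * ∫⁻ y in Q, ENNReal.ofReal (PhiLam lam (|f y| / t)) ≤ 1),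
    ENNReal.ofReal t

/-- The Orlicz maximal operator `M_{Φ_λ} f(x) = sup_{Q ∋ x} ‖f‖_{Φ_λ,Q}`. -/
noncomputable def orliczMax (n : ℕ) (lam : ℝ) (f : (Fin n → ℝ) → ℝ) :
    (Fin n → ℝ) → ℝ≥0∞ :=
  fun x => ⨆ (Q : Set (Fin n → ℝ)) (_ : IsCube n Q) (_ : x ∈ Q), luxNorm n lam Q f


lemma cube_ball_eq {n : ℕ} (a : Fin n → ℝ) {h : ℝ} (hh : 0 < h) :
    {y : Fin n → ℝ | ∀ i, y i ∈ Set.Icc (a i) (a i + h)} =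
      Metric.closedBall (fun i => a i + h / 2) (h / 2) := by
  ext y
  rw [Metric.mem_closedBall, dist_pi_le_iff (by linarith)]
  simp only [Set.mem_setOf_eq, Set.mem_Icc, Real.dist_eq, abs_sub_le_iff]
  constructor
  · intro H i; have := H i; constructor <;> linarith [this.1, this.2]
  · intro H i; have := H i; constructor <;> linarith [this.1, this.2]

lemma isCube_closedBall {n : ℕ} (c : Fin n → ℝ) {r : ℝ} (hr : 0 < r) :
    IsCube n (Metric.closedBall c r) := by
  refine ⟨fun i => c i - r, 2 * r, by linarith, ?_⟩
  rw [cube_ball_eq _ (by linarith : (0:ℝ) < 2 * r)]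
  have h1 : (fun i => (c i - r) + 2 * r / 2) = c := by ext i; ring
  have h2 : 2 * r / 2 = r := by ring
  rw [h1, h2]

lemma isCube_iff_ball {n : ℕ} {Q : Set (Fin n → ℝ)} :
    IsCube n Q ↔ ∃ (c : Fin n → ℝ) (r : ℝ), 0 < r ∧ Q = Metric.closedBall c r := by
  constructor
  · rintro ⟨a, h, hh, rfl⟩
    exact ⟨_, _, by linarith, cube_ball_eq a hh⟩
  · rintro ⟨c, r, hr, rfl⟩
    exact isCube_closedBall c hr

lemma vol_ball {n : ℕ} (c : Fin n → ℝ) {r : ℝ} (hr : 0 < r) :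
    volume (Metric.closedBall c r) = ENNReal.ofReal ((2 * r) ^ n) := by
  rw [Real.volume_pi_closedBall c hr.le, Fintype.card_fin]

lemma vol_ball_ne_zero {n : ℕ} (c : Fin n → ℝ) {r : ℝ} (hr : 0 < r) :
    volume (Metric.closedBall c r) ≠ 0 := by
  rw [vol_ball c hr]
  simp only [ne_eq, ENNReal.ofReal_eq_zero, not_le]
  positivity

lemma vol_ball_ne_top {n : ℕ} (c : Fin n → ℝ) {r : ℝ} (hr : 0 < r) :
    volume (Metric.closedBall c r) ≠ ∞ := by
  rw [vol_ball c hr]; exact ENNReal.ofReal_ne_top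

lemma vol_ball_four {n : ℕ} (c : Fin n → ℝ) {r : ℝ} (hr : 0 < r) :
    volume (Metric.closedBall c (4 * r)) = 4 ^ n * volume (Metric.closedBall c r) := by
  rw [vol_ball c hr, vol_ball c (by linarith)]
  rw [show (2 * (4 * r)) ^ n = 4 ^ n * (2 * r) ^ n by rw [← mul_pow]; ring_nf]
  rw [ENNReal.ofReal_mul (by positivity)]
  congr 1
  rw [ENNReal.ofReal_pow (by norm_num)]
  norm_num

lemma avg_le_HLM {n : ℕ} (w : (Fin n → ℝ) → ℝ≥0∞) {Q : Set (Fin n → ℝ)}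
    (hQ : IsCube n Q) {x : Fin n → ℝ} (hx : x ∈ Q) : setAvg n Q w ≤ HLM n w x :=
  le_iSup_of_le Q <| le_iSup_of_le hQ <| le_iSup_of_le hx le_rfl

lemma ball_est {n : ℕ} (w g : (Fin n → ℝ) → ℝ≥0∞)
    (hwloc : ∀ Q : Set (Fin n → ℝ), IsCube n Q → (∫⁻ y in Q, w y) < ∞)
    (c : Fin n → ℝ) {r : ℝ} (hr : 0 < r)
    (hg : 1 < setAvg n (Metric.closedBall c r) g) :
    (∫⁻ y in Metric.closedBall c (4 * r), w y) ≤
      (4 : ℝ≥0∞) ^ n * ∫⁻ y in Metric.closedBall c r, g y * HLM n w y := by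
  set Q := Metric.closedBall c r with hQdef
  set Q' := Metric.closedBall c (4 * r) with hQ'def
  have hr4 : (0:ℝ) < 4 * r := by linarith
  have hQ : IsCube n Q := isCube_closedBall c hr
  have hQ' : IsCube n Q' := isCube_closedBall c hr4
  have hQQ' : Q ⊆ Q' := Metric.closedBall_subset_closedBall (by linarith)
  set A := setAvg n Q' w with hAdef
  have hvol0 : volume Q ≠ 0 := vol_ball_ne_zero c hr
  have hvolt : volume Q ≠ ∞ := vol_ball_ne_top c hr
  have hvol'0 : volume Q' ≠ 0 := vol_ball_ne_zero c hr4
  have hvol't : volume Q' ≠ ∞ := vol_ball_ne_top c hr4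
  have hA_ne_top : A ≠ ∞ := by
    rw [hAdef, setAvg]
    exact ENNReal.mul_ne_top (ENNReal.inv_ne_top.mpr hvol'0) (hwloc Q' hQ').ne
  -- ∫_{Q'} w = volume Q' * A
  have hIQ' : (∫⁻ y in Q', w y) = volume Q' * A := by
    rw [hAdef, setAvg, ← mul_assoc, ENNReal.mul_inv_cancel hvol'0 hvol't, one_mul]
  -- volume Q ≤ ∫_Q g
  have hvleg : volume Q ≤ ∫⁻ y in Q, g y := by
    have h1 : volume Q * 1 ≤ volume Q * setAvg n Q g := mul_le_mul_right hg.le _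
    rwa [mul_one, setAvg, ← mul_assoc, ENNReal.mul_inv_cancel hvol0 hvolt, one_mul] at h1
  have hkey' : ∀ y ∈ Q, A * g y ≤ g y * HLM n w y := fun y hy => by
    rw [mul_comm]
    exact mul_le_mul_right (avg_le_HLM w hQ' (hQQ' hy)) _
  calc (∫⁻ y in Q', w y) = volume Q' * A := hIQ'
    _ = (4:ℝ≥0∞) ^ n * volume Q * A := by rw [vol_ball_four c hr]
    _ = (4:ℝ≥0∞) ^ n * (A * volume Q) := by ring
    _ ≤ (4:ℝ≥0∞) ^ n * (A * ∫⁻ y in Q, g y) := by gcongr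
    _ = (4:ℝ≥0∞) ^ n * ∫⁻ y in Q, A * g y := by rw [lintegral_const_mul' A g hA_ne_top]
    _ ≤ (4:ℝ≥0∞) ^ n * ∫⁻ y in Q, g y * HLM n w y :=
        mul_le_mul_right (setLIntegral_mono' Metric.isClosed_closedBall.measurableSet hkey') _

lemma FS {n : ℕ} (w g : (Fin n → ℝ) → ℝ≥0∞) (hw : Measurable w)
    (hwloc : ∀ Q : Set (Fin n → ℝ), IsCube n Q → (∫⁻ y in Q, w y) < ∞) :
    (∫⁻ x in {x | 1 < HLM n g x}, w x) ≤ (4 : ℝ≥0∞) ^ n * ∫⁻ x, g x * HLM n w x := by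
  set ν := volume.withDensity w with hν
  have hν_le : ∀ s : Set (Fin n → ℝ), (∫⁻ x in s, w x) ≤ ν s := by
    intro s
    calc (∫⁻ x in s, w x) ≤ ∫⁻ x in toMeasurable ν s, w x :=
          lintegral_mono_set (subset_toMeasurable _ _)
      _ = ν (toMeasurable ν s) := (withDensity_apply w (measurableSet_toMeasurable _ _)).symm
      _ = ν s := measure_toMeasurable s
  set E : ℕ → Set (Fin n → ℝ) := fun k =>
    {x | ∃ (c : Fin n → ℝ) (r : ℝ), 0 < r ∧ r ≤ (k : ℝ) ∧
      x ∈ Metric.closedBall c r ∧ 1 < setAvg n (Metric.closedBall c r) g} with hE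
  have hmono : Monotone E := by
    intro k l hkl x hx
    obtain ⟨c, r, h1, h2, h3, h4⟩ := hx
    exact ⟨c, r, h1, h2.trans (by exact_mod_cast Nat.cast_le.mpr hkl), h3, h4⟩
  have hsub : {x | 1 < HLM n g x} ⊆ ⋃ k, E k := by
    intro x hx
    simp only [Set.mem_setOf_eq, HLM, lt_iSup_iff] at hx
    obtain ⟨Q, hQ, hxQ, havg⟩ := hx
    obtain ⟨c, r, hr, rfl⟩ := isCube_iff_ball.mp hQ
    exact Set.mem_iUnion.mpr ⟨⌈r⌉₊, c, r, hr, Nat.le_ceil r, hxQ, havg⟩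
  have hEk : ∀ k : ℕ, ν (E k) ≤ (4 : ℝ≥0∞) ^ n * ∫⁻ x, g x * HLM n w x := by
    intro k
    -- Vitali covering
    obtain ⟨u, hut, hdisj, hcov⟩ :=
      Vitali.exists_disjoint_subfamily_covering_enlargement_closedBall
        {p : (Fin n → ℝ) × ℝ | 0 < p.2 ∧ p.2 ≤ (k : ℝ) ∧
          1 < setAvg n (Metric.closedBall p.1 p.2) g}
        Prod.fst Prod.snd (k : ℝ) (fun p hp => hp.2.1) 4 (by norm_num)
    -- u is countable
    have hu_count : u.Countable := by
      rw [← Set.countable_coe_iff]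
      have := MeasureTheory.Measure.countable_meas_pos_of_disjoint_iUnion
        (μ := (volume : Measure (Fin n → ℝ)))
        (As := fun b : u => Metric.closedBall b.1.1 b.1.2)
        (fun b => Metric.isClosed_closedBall.measurableSet)
        (fun b b' hbb' => hdisj b.2 b'.2 (fun h => hbb' (Subtype.ext h)))
      have huniv : {b : u | 0 < volume (Metric.closedBall b.1.1 b.1.2)} = Set.univ := by
        ext b
        simp only [Set.mem_setOf_eq, Set.mem_univ, iff_true]
        exact (vol_ball_ne_zero b.1.1 (hut b.2).1).bot_lt
      rw [huniv] at this
      exact Set.countable_univ_iff.mp this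
    haveI : Countable u := hu_count.to_subtype
    have hcover : E k ⊆ ⋃ b ∈ u, Metric.closedBall b.1 (4 * b.2) := by
      intro x hx
      obtain ⟨c, r, h1, h2, h3, h4⟩ := hx
      obtain ⟨b, hbu, hsubb⟩ := hcov (c, r) ⟨h1, h2, h4⟩
      exact Set.mem_biUnion hbu (hsubb h3)
    calc ν (E k) ≤ ν (⋃ b ∈ u, Metric.closedBall b.1 (4 * b.2)) := measure_mono hcover
      _ ≤ ∑' b : u, ν (Metric.closedBall b.1.1 (4 * b.1.2)) := measure_biUnion_le ν hu_count _
      _ ≤ ∑' b : u, (4 : ℝ≥0∞) ^ n * ∫⁻ y in Metric.closedBall b.1.1 b.1.2,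
            g y * HLM n w y := by
          refine ENNReal.tsum_le_tsum fun b => ?_
          rw [hν, withDensity_apply w Metric.isClosed_closedBall.measurableSet]
          exact ball_est w g hwloc b.1.1 (hut b.2).1 (hut b.2).2.2
      _ = (4 : ℝ≥0∞) ^ n * ∑' b : u, ∫⁻ y in Metric.closedBall b.1.1 b.1.2,
            g y * HLM n w y := ENNReal.tsum_mul_left
      _ = (4 : ℝ≥0∞) ^ n * ∫⁻ y in ⋃ b : u, Metric.closedBall b.1.1 b.1.2,
            g y * HLM n w y := by
          rw [lintegral_iUnion (s := fun b : u => Metric.closedBall b.1.1 b.1.2)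
            (fun b => Metric.isClosed_closedBall.measurableSet)
            (fun (b b' : u) hbb' => hdisj b.2 b'.2 (fun h => hbb' (Subtype.ext h)))]
      _ ≤ (4 : ℝ≥0∞) ^ n * ∫⁻ y, g y * HLM n w y := by
          gcongr
          exact Measure.restrict_le_self
  calc (∫⁻ x in {x | 1 < HLM n g x}, w x) ≤ ν {x | 1 < HLM n g x} := hν_le _
    _ ≤ ν (⋃ k, E k) := measure_mono hsub
    _ = ⨆ k, ν (E k) := hmono.measure_iUnion
    _ ≤ (4 : ℝ≥0∞) ^ n * ∫⁻ x, g x * HLM n w x := iSup_le hEk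

/-- the Fefferman–Stein type inequality for the Orlicz maximal operator:
`w({M_{Φ_λ}f > t}) ≤ c ∫ Φ_λ(f/t) Mw dx` for every weight `w`, every `t > 0` and
every nonnegative measurable `f`. -/
theorem statement12 (n : ℕ) (hn : 1 ≤ n) (lam : ℝ) (hlam : 0 ≤ lam) :
    ∃ c : ℝ≥0∞, 0 < c ∧ c < ∞ ∧
      ∀ w : (Fin n → ℝ) → ℝ≥0∞, IsWeight n w →
        ∀ t : ℝ, 0 < t → ∀ f : (Fin n → ℝ) → ℝ, Measurable f → (∀ x, 0 ≤ f x) →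
          (∫⁻ x in {x | ENNReal.ofReal t < orliczMax n lam f x}, w x) ≤
            c * ∫⁻ x, ENNReal.ofReal (PhiLam lam (f x / t)) * HLM n w x := by
  refine ⟨(4 : ℝ≥0∞) ^ n, ENNReal.pow_pos (by norm_num) n, ENNReal.pow_lt_top (by norm_num), ?_⟩
  intro w hw t ht f hf hf0
  set g : (Fin n → ℝ) → ℝ≥0∞ := fun x => ENNReal.ofReal (PhiLam lam (f x / t)) with hg
  have hsub : {x | ENNReal.ofReal t < orliczMax n lam f x} ⊆ {x | 1 < HLM n g x} := by
    intro x hx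
    simp only [Set.mem_setOf_eq, orliczMax, lt_iSup_iff] at hx
    obtain ⟨Q, hQ, hxQ, hlux⟩ := hx
    simp only [Set.mem_setOf_eq]
    by_contra hle
    push_neg at hle
    have havg : setAvg n Q g ≤ 1 := le_trans (avg_le_HLM g hQ hxQ) hle
    have hcond : (volume Q)⁻¹ * (∫⁻ y in Q, ENNReal.ofReal (PhiLam lam (|f y| / t))) ≤ 1 := by
      have : (∫⁻ y in Q, ENNReal.ofReal (PhiLam lam (|f y| / t))) = ∫⁻ y in Q, g y :=
        lintegral_congr fun y => by rw [hg, abs_of_nonneg (hf0 y)]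
      rw [this]; exact havg
    have : luxNorm n lam Q f ≤ ENNReal.ofReal t :=
      iInf_le_of_le t (iInf_le_of_le ht (iInf_le_of_le hcond le_rfl))
    exact absurd hlux (not_lt.mpr this)
  calc (∫⁻ x in {x | ENNReal.ofReal t < orliczMax n lam f x}, w x)
      ≤ ∫⁻ x in {x | 1 < HLM n g x}, w x := lintegral_mono_set hsub
    _ ≤ (4 : ℝ≥0∞) ^ n * ∫⁻ x, g x * HLM n w x := FS w g hw.1 (fun Q hQ => hw.2 Q hQ)
    _ = (4 : ℝ≥0∞) ^ n * ∫⁻ x, ENNReal.ofReal (PhiLam lam (f x / t)) * HLM n w x := rfl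
end

section
/- Let n ≥ 1 and let 𝓑 be a collection of open subsets of ℝ^n, each of finite positive Lebesgue measure. Assume that the associated maximal operator M_𝓑 is bounded on unweighted L^p(ℝ^n) for every 1 < p < ∞, and that limsup_{p→1⁺} ‖M_𝓑‖_{L^p(ℝ^n)} = ∞. Let 1 < p₀ < ∞ and β ≥ 0, and suppose there is a constant c > 0 such that for every weight w with [w]_{A_{p₀,𝓑}} < ∞ and every f with ‖f‖_{L^{p₀}(w)} < ∞, ‖M_𝓑 f‖_{L^{p₀}(w)} ≤ c [w]_{A_{p₀,𝓑}}^β ‖f‖_{L^{p₀}(w)}. Then β ≥ 1/(p₀−1). -/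
open MeasureTheory Filter
open scoped ENNReal NNReal

/-- The maximal operator associated to a basis `𝓑`:
`M_𝓑 f(x) = sup_{x ∈ B ∈ 𝓑} ⨍_B |f|` (and `0` if `x` lies in no member of `𝓑`). -/
noncomputable def basisMax (n : ℕ) (𝓑 : Set (Set (Fin n → ℝ)))
    (g : (Fin n → ℝ) → ℝ≥0∞) : (Fin n → ℝ) → ℝ≥0∞ :=
  fun x => ⨆ (B ∈ 𝓑) (_ : x ∈ B), setAvg n B g

/-- The `A_{p,𝓑}` constant of a weight `w` relative to the basis `𝓑`. -/
noncomputable def ApBasisConst (n : ℕ) (p : ℝ) (𝓑 : Set (Set (Fin n → ℝ)))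
    (w : (Fin n → ℝ) → ℝ≥0∞) : ℝ≥0∞ :=
  ⨆ (B ∈ 𝓑),
    setAvg n B w * (setAvg n B fun y => w y ^ (1 - p / (p - 1))) ^ (p - 1)

/-- The operator norm of `M_𝓑` on unweighted `L^p(ℝⁿ)`. -/
noncomputable def basisMaxOpNorm (n : ℕ) (𝓑 : Set (Set (Fin n → ℝ))) (p : ℝ) : ℝ≥0∞ :=
  sInf {C : ℝ≥0∞ | ∀ f : (Fin n → ℝ) → ℝ, Measurable f → lpNorm n p f < ∞ →
    lpNormE n p (basisMax n 𝓑 fun y => (‖f y‖₊ : ℝ≥0∞)) ≤ C * lpNorm n p f}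

section Aux

variable {n : ℕ} {𝓑 : Set (Set (Fin n → ℝ))}

lemma setAvg_mono {B : Set (Fin n → ℝ)} {h h' : (Fin n → ℝ) → ℝ≥0∞} (hle : ∀ x, h x ≤ h' x) :
    setAvg n B h ≤ setAvg n B h' :=
  mul_le_mul_right (lintegral_mono hle) _

lemma basisMax_mono {h h' : (Fin n → ℝ) → ℝ≥0∞} (hle : ∀ x, h x ≤ h' x) (x : Fin n → ℝ) :
    basisMax n 𝓑 h x ≤ basisMax n 𝓑 h' x := by
  refine iSup_mono fun B => iSup_mono fun hB => iSup_mono fun hx => setAvg_mono hle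

lemma setAvg_congr_ae {B : Set (Fin n → ℝ)} {h h' : (Fin n → ℝ) → ℝ≥0∞}
    (hae : h =ᵐ[volume] h') : setAvg n B h = setAvg n B h' := by
  unfold setAvg
  rw [lintegral_congr_ae (ae_restrict_of_ae hae)]

lemma basisMax_congr_ae {h h' : (Fin n → ℝ) → ℝ≥0∞} (hae : h =ᵐ[volume] h') :
    basisMax n 𝓑 h = basisMax n 𝓑 h' := by
  funext x
  unfold basisMax
  congr 1; funext B; congr 1; funext hB; congr 1; funext hx
  exact setAvg_congr_ae hae

lemma setAvg_const_mul {B : Set (Fin n → ℝ)} (a : ℝ≥0∞) {h : (Fin n → ℝ) → ℝ≥0∞}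
    (hm : Measurable h) : setAvg n B (fun y => a * h y) = a * setAvg n B h := by
  unfold setAvg
  rw [lintegral_const_mul a hm]; ring

lemma basisMax_const_mul (a : ℝ≥0∞) {h : (Fin n → ℝ) → ℝ≥0∞} (hm : Measurable h)
    (x : Fin n → ℝ) : basisMax n 𝓑 (fun y => a * h y) x = a * basisMax n 𝓑 h x := by
  unfold basisMax
  rw [ENNReal.mul_iSup]
  refine iSup_congr fun B => ?_
  rw [ENNReal.mul_iSup]
  refine iSup_congr fun hB => ?_
  rw [ENNReal.mul_iSup]
  exact iSup_congr fun hx => setAvg_const_mul a hm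

lemma basisMax_measurable (hopen : ∀ B ∈ 𝓑, IsOpen B) (h : (Fin n → ℝ) → ℝ≥0∞) :
    Measurable (basisMax n 𝓑 h) := by
  apply measurable_of_Ioi
  intro t
  have : basisMax n 𝓑 h ⁻¹' Set.Ioi t = ⋃ B ∈ {B ∈ 𝓑 | t < setAvg n B h}, B := by
    ext x
    simp only [Set.mem_preimage, Set.mem_Ioi, basisMax, lt_iSup_iff, Set.mem_iUnion,
      Set.mem_setOf_eq]
    constructor
    · rintro ⟨B, hB, hx, ht⟩; exact ⟨B, ⟨hB, ht⟩, hx⟩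
    · rintro ⟨B, ⟨hB, ht⟩, hx⟩; exact ⟨B, hB, hx, ht⟩
  rw [this]
  exact (isOpen_biUnion fun B hB => hopen B hB.1).measurableSet

lemma basisMax_tsum_le (h : ℕ → (Fin n → ℝ) → ℝ≥0∞) (hm : ∀ k, Measurable (h k))
    (x : Fin n → ℝ) :
    basisMax n 𝓑 (fun y => ∑' k, h k y) x ≤ ∑' k, basisMax n 𝓑 (h k) x := by
  refine iSup₂_le fun B hB => iSup_le fun hx => ?_
  have : setAvg n B (fun y => ∑' k, h k y) = ∑' k, setAvg n B (h k) := by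
    unfold setAvg
    rw [lintegral_tsum fun k => (hm k).aemeasurable, ENNReal.tsum_mul_left]
  rw [this]
  exact ENNReal.tsum_le_tsum fun k =>
    le_iSup_of_le B (le_iSup_of_le hB (le_iSup_of_le hx le_rfl))

end Aux
section Aux2

variable {n : ℕ} {𝓑 : Set (Set (Fin n → ℝ))}

lemma iSup_rpow {p : ℝ} (hp : 0 < p) (a : ℕ → ℝ≥0∞) : (⨆ k, a k) ^ p = ⨆ k, a k ^ p := by
  apply le_antisymm
  · have h1 : (⨆ k, a k) ≤ (⨆ k, a k ^ p) ^ (1 / p) := by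
      refine iSup_le fun k => ?_
      have : a k = (a k ^ p) ^ (1 / p) := by
        rw [← ENNReal.rpow_mul, mul_one_div_cancel hp.ne', ENNReal.rpow_one]
      rw [this]
      exact ENNReal.rpow_le_rpow (le_iSup (fun k => a k ^ p) k) (by positivity)
    calc (⨆ k, a k) ^ p ≤ ((⨆ k, a k ^ p) ^ (1 / p)) ^ p :=
          ENNReal.rpow_le_rpow h1 hp.le
      _ = ⨆ k, a k ^ p := by
          rw [← ENNReal.rpow_mul, one_div_mul_cancel hp.ne', ENNReal.rpow_one]
  · exact iSup_le fun k => ENNReal.rpow_le_rpow (le_iSup a k) hp.le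

lemma lpNormE_mono {p : ℝ} (hp : 0 ≤ p) {h h' : (Fin n → ℝ) → ℝ≥0∞} (hle : ∀ x, h x ≤ h' x) :
    lpNormE n p h ≤ lpNormE n p h' :=
  ENNReal.rpow_le_rpow (lintegral_mono fun x => ENNReal.rpow_le_rpow (hle x) hp) (by positivity)

lemma lpNormE_const_mul {p : ℝ} (hp : 0 < p) (a : ℝ≥0∞) {h : (Fin n → ℝ) → ℝ≥0∞}
    (hm : Measurable h) : lpNormE n p (fun x => a * h x) = a * lpNormE n p h := by
  unfold lpNormE
  have : ∀ x, (a * h x) ^ p = a ^ p * h x ^ p := fun x =>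
    ENNReal.mul_rpow_of_nonneg _ _ hp.le
  simp_rw [this]
  rw [lintegral_const_mul _ (hm.pow_const p), ENNReal.mul_rpow_of_nonneg _ _ (by positivity),
    ← ENNReal.rpow_mul, mul_one_div_cancel hp.ne', ENNReal.rpow_one]

lemma lpNormE_add_le {p : ℝ} (hp : 1 ≤ p) {h h' : (Fin n → ℝ) → ℝ≥0∞}
    (hm : Measurable h) (hm' : Measurable h') :
    lpNormE n p (fun x => h x + h' x) ≤ lpNormE n p h + lpNormE n p h' :=
  ENNReal.lintegral_Lp_add_le hm.aemeasurable hm'.aemeasurable hp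

lemma lpNormE_tsum_le {p : ℝ} (hp : 1 ≤ p) (h : ℕ → (Fin n → ℝ) → ℝ≥0∞)
    (hm : ∀ k, Measurable (h k)) :
    lpNormE n p (fun x => ∑' k, h k x) ≤ ∑' k, lpNormE n p (h k) := by
  have hp0 : (0:ℝ) < p := lt_of_lt_of_le zero_lt_one hp
  set S : ℕ → (Fin n → ℝ) → ℝ≥0∞ := fun K x => ∑ k ∈ Finset.range K, h k x with hS
  have hSm : ∀ K, Measurable (S K) := fun K => Finset.measurable_sum _ fun k _ => hm k
  have hfin : ∀ K, (∫⁻ x, S K x ^ p) ^ (1/p) ≤ ∑ k ∈ Finset.range K, lpNormE n p (h k) := by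
    intro K
    induction K with
    | zero => simp [hS, ENNReal.zero_rpow_of_pos hp0, ENNReal.zero_rpow_of_pos (show (0:ℝ) < 1/p by positivity), hp0]
    | succ K ih =>
        have : S (K+1) = fun x => S K x + h K x := by
          funext x; simp [hS, Finset.sum_range_succ]
        rw [this, Finset.sum_range_succ]
        calc (∫⁻ x, (S K x + h K x) ^ p) ^ (1/p)
            ≤ (∫⁻ x, S K x ^ p) ^ (1/p) + (∫⁻ x, h K x ^ p) ^ (1/p) :=
              ENNReal.lintegral_Lp_add_le (hSm K).aemeasurable (hm K).aemeasurable hp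
          _ ≤ ∑ k ∈ Finset.range K, lpNormE n p (h k) + lpNormE n p (h K) :=
              add_le_add ih le_rfl
  have key : ∫⁻ x, (∑' k, h k x) ^ p = ⨆ K, ∫⁻ x, S K x ^ p := by
    have h1 : ∀ x, (∑' k, h k x) ^ p = ⨆ K, S K x ^ p := by
      intro x
      rw [ENNReal.tsum_eq_iSup_nat, iSup_rpow hp0]
    simp_rw [h1]
    refine lintegral_iSup (fun K => (hSm K).pow_const p) ?_
    intro K K' hKK' x
    exact ENNReal.rpow_le_rpow (Finset.sum_le_sum_of_subset
      (Finset.range_subset_range.2 hKK')) hp0.le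
  unfold lpNormE
  rw [key]
  have : (⨆ K, ∫⁻ x, S K x ^ p) ≤ (∑' k, lpNormE n p (h k)) ^ p := by
    refine iSup_le fun K => ?_
    have h2 : (∫⁻ x, S K x ^ p) = ((∫⁻ x, S K x ^ p) ^ (1/p)) ^ p := by
      rw [← ENNReal.rpow_mul, one_div_mul_cancel hp0.ne', ENNReal.rpow_one]
    rw [h2]
    refine ENNReal.rpow_le_rpow (le_trans (hfin K) ?_) hp0.le
    exact ENNReal.sum_le_tsum _
  calc (⨆ K, ∫⁻ x, S K x ^ p) ^ (1/p) ≤ ((∑' k, lpNormE n p (h k)) ^ p) ^ (1/p) :=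
        ENNReal.rpow_le_rpow this (by positivity)
    _ = ∑' k, lpNormE n p (h k) := by
        rw [← ENNReal.rpow_mul, mul_one_div_cancel hp0.ne', ENNReal.rpow_one]

lemma ennreal_tsum_shift_le (a : ℕ → ℝ≥0∞) : (∑' k, a (k+1)) ≤ ∑' k, a k :=
  ENNReal.summable.tsum_le_tsum_of_inj (fun k => k + 1) (fun a b h => by simpa using h)
    (fun c _ => zero_le) (fun k => le_rfl) ENNReal.summable

end Aux2
section Aux3

variable {n : ℕ} {𝓑 : Set (Set (Fin n → ℝ))}

lemma lpNormE_fin_ne_top {p : ℝ} (hp : 0 < p) {h : (Fin n → ℝ) → ℝ≥0∞}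
    (hfin : lpNormE n p h < ∞) : (∫⁻ x, h x ^ p) ≠ ∞ := by
  intro htop
  rw [lpNormE, htop, ENNReal.top_rpow_of_pos (by positivity)] at hfin
  exact (lt_irrefl _ hfin).elim

lemma ae_lt_top_of_lpNormE {p : ℝ} (hp : 0 < p) {h : (Fin n → ℝ) → ℝ≥0∞}
    (hm : Measurable h) (hfin : lpNormE n p h < ∞) : ∀ᵐ x ∂(volume), h x < ∞ := by
  have := ae_lt_top (hm.pow_const p) (lpNormE_fin_ne_top hp hfin)
  filter_upwards [this] with x hx
  by_contra hc
  push_neg at hc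
  rw [top_le_iff.1 hc, ENNReal.top_rpow_of_pos hp] at hx
  exact lt_irrefl _ hx

lemma basisMax_zero_of_ae_zero {h : (Fin n → ℝ) → ℝ≥0∞} (hae : h =ᵐ[volume] 0) :
    ∀ x, basisMax n 𝓑 h x = 0 := by
  intro x
  refine le_antisymm (iSup₂_le fun B hB => iSup_le fun hx => ?_) (zero_le)
  have : (∫⁻ y in B, h y) = 0 := by
    have h0 : (∫⁻ y, h y) = 0 := by
      rw [lintegral_congr_ae hae]; simp
    exact le_antisymm (le_trans (setLIntegral_le_lintegral _ _) h0.le) (zero_le)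
  rw [setAvg, this, mul_zero]

lemma basisMax_lpNormE_le {p : ℝ} (hp : 1 ≤ p) {h : (Fin n → ℝ) → ℝ≥0∞}
    (hm : Measurable h) (hfin : lpNormE n p h < ∞) :
    lpNormE n p (basisMax n 𝓑 h) ≤ basisMaxOpNorm n 𝓑 p * lpNormE n p h := by
  have hp0 : (0:ℝ) < p := lt_of_lt_of_le zero_lt_one hp
  set L := lpNormE n p h with hL
  by_cases hL0 : L = 0
  · -- h = 0 a.e., so basisMax h ≡ 0
    have hint : (∫⁻ x, h x ^ p) = 0 := by
      have := hL0
      rw [hL, lpNormE] at this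
      rcases (ENNReal.rpow_eq_zero_iff.1 this) with ⟨h1, _⟩ | ⟨_, h2⟩
      · exact h1
      · linarith [h2, (show (0:ℝ) < 1/p by positivity)]
    have hae : h =ᵐ[volume] 0 := by
      have := (lintegral_eq_zero_iff (hm.pow_const p)).1 hint
      filter_upwards [this] with x hx
      simp only [Pi.zero_apply] at hx ⊢
      rcases ENNReal.rpow_eq_zero_iff.1 hx with ⟨h1, _⟩ | ⟨_, h2⟩
      · exact h1
      · linarith
    have : ∀ x, basisMax n 𝓑 h x = 0 := basisMax_zero_of_ae_zero hae
    simp only [lpNormE, this]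
    rw [lintegral_congr fun x => by rw [ENNReal.zero_rpow_of_pos hp0]]
    rw [lintegral_zero, ENNReal.zero_rpow_of_pos (show (0:ℝ) < 1/p by positivity)]
    exact zero_le
  · have hae := ae_lt_top_of_lpNormE hp0 hm hfin
    set f' : (Fin n → ℝ) → ℝ := fun x => (h x).toReal with hf'
    have hf'm : Measurable f' := hm.ennreal_toReal
    have haeq : (fun x => (‖f' x‖₊ : ℝ≥0∞)) =ᵐ[volume] h := by
      filter_upwards [hae] with x hx
      simp only [hf']
      rw [← enorm_eq_nnnorm, Real.enorm_eq_ofReal ENNReal.toReal_nonneg, ENNReal.ofReal_toReal hx.ne]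
    have hnorm : lpNorm n p f' = L := by
      rw [_root_.lpNorm, hL, lpNormE]
      congr 1
      refine lintegral_congr_ae ?_
      filter_upwards [haeq] with x hx
      rw [hx]
    have hMeq : basisMax n 𝓑 (fun y => (‖f' y‖₊ : ℝ≥0∞)) = basisMax n 𝓑 h :=
      basisMax_congr_ae haeq
    set X := lpNormE n p (basisMax n 𝓑 h) with hX
    have hdiv : X / L ≤ basisMaxOpNorm n 𝓑 p := by
      refine le_sInf fun C hC => ?_
      have := hC f' hf'm (by rw [hnorm]; exact hfin)
      rw [hMeq, hnorm] at this
      exact (ENNReal.div_le_iff_le_mul (Or.inl hL0) (Or.inl hfin.ne)).2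
        (this.trans_eq (mul_comm _ _) |>.trans_eq (mul_comm _ _))
    calc X = X / L * L := by
          rw [ENNReal.div_mul_cancel hL0 hfin.ne]
      _ ≤ basisMaxOpNorm n 𝓑 p * L := mul_le_mul_left hdiv _
end Aux3
section Aux4

lemma ennreal_rpow_le_one_add {a : ℝ≥0∞} {e : ℝ} (he0 : 0 ≤ e) (he1 : e ≤ 1) :
    a ^ e ≤ 1 + a := by
  rcases le_total a 1 with h | h
  · exact le_trans (ENNReal.rpow_le_one h he0) le_self_add
  · calc a ^ e ≤ a ^ (1:ℝ) := ENNReal.rpow_le_rpow_of_exponent_le h he1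
      _ = a := ENNReal.rpow_one a
      _ ≤ 1 + a := le_add_self

lemma tsum_inv_two_pow : (∑' k : ℕ, ((2:ℝ≥0∞) ^ k)⁻¹) = 2 := by
  have : ∀ k : ℕ, ((2:ℝ≥0∞) ^ k)⁻¹ = (2⁻¹ : ℝ≥0∞) ^ k := fun k => by
    rw [ENNReal.inv_pow]
  simp_rw [this]
  rw [ENNReal.tsum_geometric]
  have h1 : (1:ℝ≥0∞) - 2⁻¹ = 2⁻¹ := by
    rw [ENNReal.sub_eq_of_eq_add (by simp)]
    rw [ENNReal.inv_two_add_inv_two]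
  rw [h1, inv_inv]

lemma exists_good_h0 (n : ℕ) :
    ∃ h₀ : (Fin n → ℝ) → ℝ≥0∞, Measurable h₀ ∧ (∀ x, 0 < h₀ x) ∧ (∀ x, h₀ x < ∞) ∧
      (∀ p : ℝ, 1 ≤ p → lpNormE n p h₀ ≤ 2) ∧
      (∀ Q : Set (Fin n → ℝ), IsCube n Q → ∃ ε : ℝ≥0∞, 0 < ε ∧ ε < ∞ ∧ ∀ x ∈ Q, ε ≤ h₀ x) := by
  set c : ℕ → ℝ≥0∞ := fun k =>
    ((2:ℝ≥0∞) ^ k)⁻¹ * (volume (Metric.ball (0 : Fin n → ℝ) (k+1)) + 1)⁻¹ with hc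
  set T : ℕ → (Fin n → ℝ) → ℝ≥0∞ := fun k =>
    fun x => c k * (Metric.ball (0 : Fin n → ℝ) (k+1)).indicator (fun _ => (1:ℝ≥0∞)) x with hT
  have hTm : ∀ k, Measurable (T k) := fun k =>
    (measurable_const.indicator Metric.isOpen_ball.measurableSet).const_mul _
  have hcpos : ∀ k, 0 < c k := by
    intro k
    apply ENNReal.mul_pos
    · simp [ENNReal.inv_ne_zero, ENNReal.pow_ne_top ENNReal.ofNat_ne_top]
    · exact ENNReal.inv_ne_zero.2 (by
        exact ENNReal.add_ne_top.2 ⟨(measure_ball_lt_top).ne, ENNReal.one_ne_top⟩)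
  have hcle : ∀ k, c k ≤ ((2:ℝ≥0∞) ^ k)⁻¹ := by
    intro k
    calc c k ≤ ((2:ℝ≥0∞) ^ k)⁻¹ * 1 := mul_le_mul_right (ENNReal.inv_le_one.2 le_add_self) _
      _ = ((2:ℝ≥0∞) ^ k)⁻¹ := mul_one _
  refine ⟨fun x => ∑' k, T k x, Measurable.ennreal_tsum hTm, ?_, ?_, ?_, ?_⟩
  · -- positivity
    intro x
    obtain ⟨k, hk⟩ := exists_nat_gt ‖x‖
    have hxk : x ∈ Metric.ball (0 : Fin n → ℝ) (k+1) := by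
      rw [Metric.mem_ball, dist_zero_right]
      linarith
    have : c k ≤ T k x := by
      simp only [hT, Set.indicator_of_mem hxk, mul_one, le_refl]
    exact lt_of_lt_of_le (hcpos k) (le_trans this (ENNReal.le_tsum k))
  · -- finiteness
    intro x
    have : (∑' k, T k x) ≤ ∑' k : ℕ, ((2:ℝ≥0∞) ^ k)⁻¹ := by
      refine ENNReal.tsum_le_tsum fun k => ?_
      calc T k x ≤ c k * 1 := mul_le_mul_right (Set.indicator_le_self' (fun _ _ => zero_le_one) x) _
        _ ≤ ((2:ℝ≥0∞)^k)⁻¹ := by rw [mul_one]; exact hcle k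
    rw [tsum_inv_two_pow] at this
    exact lt_of_le_of_lt this (by norm_num)
  · -- lp norm bound
    intro p hp
    have hp0 : (0:ℝ) < p := lt_of_lt_of_le zero_lt_one hp
    calc lpNormE n p (fun x => ∑' k, T k x) ≤ ∑' k, lpNormE n p (T k) :=
          lpNormE_tsum_le hp T hTm
      _ ≤ ∑' k : ℕ, ((2:ℝ≥0∞) ^ k)⁻¹ := by
          refine ENNReal.tsum_le_tsum fun k => ?_
          set B := Metric.ball (0 : Fin n → ℝ) (k+1)
          have hind : lpNormE n p (fun x => B.indicator (fun _ => (1:ℝ≥0∞)) x)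
              = volume B ^ (1/p) := by
            rw [lpNormE]
            congr 1
            have : ∀ x, (B.indicator (fun _ => (1:ℝ≥0∞)) x) ^ p
                = B.indicator (fun _ => (1:ℝ≥0∞)) x := by
              intro x
              by_cases hx : x ∈ B
              · simp [Set.indicator_of_mem hx]
              · simp [Set.indicator_of_notMem hx, ENNReal.zero_rpow_of_pos hp0]
            simp_rw [this]
            rw [lintegral_indicator Metric.isOpen_ball.measurableSet]
            simp
            rfl
          have : lpNormE n p (T k) = c k * volume B ^ (1/p) := by
            rw [hT]
            rw [lpNormE_const_mul hp0 (c k)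
              (measurable_const.indicator Metric.isOpen_ball.measurableSet), hind]
          rw [this]
          calc c k * volume B ^ (1/p)
              ≤ c k * (1 + volume B) :=
                mul_le_mul_right (ennreal_rpow_le_one_add (by positivity)
                  (by rw [div_le_one hp0]; linarith)) _
            _ = ((2:ℝ≥0∞) ^ k)⁻¹ * ((volume B + 1)⁻¹ * (volume B + 1)) := by
                rw [hc, add_comm (1:ℝ≥0∞)]; ring
            _ = ((2:ℝ≥0∞) ^ k)⁻¹ := by
                rw [ENNReal.inv_mul_cancel (by simp) (ENNReal.add_ne_top.2
                  ⟨measure_ball_lt_top.ne, ENNReal.one_ne_top⟩), mul_one]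
      _ = 2 := tsum_inv_two_pow
  · -- lower bound on cubes
    rintro Q ⟨a, hh, hhpos, rfl⟩
    obtain ⟨k, hk⟩ := exists_nat_gt (‖a‖ + hh)
    refine ⟨c k, hcpos k, ?_, ?_⟩
    · exact lt_of_le_of_lt (hcle k) (lt_of_le_of_lt
        (ENNReal.inv_le_one.2 (one_le_pow_of_one_le' (by norm_num : (1:ℝ≥0∞) ≤ 2) k))
        ENNReal.one_lt_top)
    intro x hx
    have hxb : x ∈ Metric.ball (0 : Fin n → ℝ) (k+1) := by
      rw [Metric.mem_ball, dist_zero_right]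
      have hnorm : ‖x‖ ≤ ‖a‖ + hh := by
        refine pi_norm_le_iff_of_nonneg (by positivity) |>.2 fun i => ?_
        have h1 := hx i
        have h2 : |a i| ≤ ‖a‖ := norm_le_pi_norm a i
        rw [Real.norm_eq_abs, abs_le]
        rcases h1 with ⟨hl, hu⟩
        constructor
        · nlinarith [neg_abs_le (a i)]
        · nlinarith [le_abs_self (a i)]
      linarith
    calc c k = T k x := by simp [hT, Set.indicator_of_mem hxb]
      _ ≤ ∑' j, T j x := ENNReal.le_tsum k

end Aux4
section Aux5

variable {n : ℕ} {𝓑 : Set (Set (Fin n → ℝ))}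

lemma setAvg_rpow_le {B : Set (Fin n → ℝ)} (hB0 : volume B ≠ 0) (hBt : volume B ≠ ∞)
    {v : (Fin n → ℝ) → ℝ≥0∞} (hv : Measurable v) {s : ℝ} (hs0 : 0 < s) (hs1 : s < 1) :
    setAvg n B (fun y => v y ^ s) ≤ (setAvg n B v) ^ s := by
  have hpq : Real.HolderConjugate (1/s) (1/(1-s)) := by
    refine Real.holderConjugate_iff.2 ⟨?_, ?_⟩
    · rw [lt_div_iff₀ hs0]; linarith
    · rw [one_div, one_div, inv_inv, inv_inv]; ring
  have h1 : ∀ y, (v y ^ s) ^ (1/s) = v y := by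
    intro y
    rw [← ENNReal.rpow_mul, mul_one_div_cancel hs0.ne', ENNReal.rpow_one]
  have h2 : (1:ℝ≥0∞) ^ (1/(1-s)) = 1 := ENNReal.one_rpow _
  have hH := ENNReal.lintegral_mul_le_Lp_mul_Lq (volume.restrict B) hpq
    (hv.pow_const s).aemeasurable (aemeasurable_const (b := (1:ℝ≥0∞)))
  simp only [Pi.mul_apply, mul_one, h1, h2] at hH
  rw [setLIntegral_one, one_div_one_div, one_div_one_div] at hH
  unfold setAvg
  calc (volume B)⁻¹ * ∫⁻ y in B, v y ^ s
      ≤ (volume B)⁻¹ * ((∫⁻ y in B, v y) ^ s * volume B ^ (1-s)) :=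
        mul_le_mul_right hH _
    _ = ((volume B)⁻¹ * ∫⁻ y in B, v y) ^ s := by
        have hinv0 : (volume B)⁻¹ ≠ 0 := ENNReal.inv_ne_zero.2 hBt
        have hinvt : (volume B)⁻¹ ≠ ∞ := ENNReal.inv_ne_top.2 hB0
        have hsplit : (volume B)⁻¹ = (volume B)⁻¹ ^ s * (volume B)⁻¹ ^ (1-s) := by
          rw [← ENNReal.rpow_add _ _ hinv0 hinvt]
          norm_num
        rw [ENNReal.mul_rpow_of_nonneg _ _ hs0.le]
        calc (volume B)⁻¹ * ((∫⁻ y in B, v y) ^ s * volume B ^ (1-s))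
            = ((volume B)⁻¹ ^ s * (∫⁻ y in B, v y) ^ s) *
              ((volume B)⁻¹ ^ (1-s) * volume B ^ (1-s)) := by
              conv_lhs => rw [hsplit]
              ring
          _ = (volume B)⁻¹ ^ s * (∫⁻ y in B, v y) ^ s := by
              rw [← ENNReal.mul_rpow_of_nonneg _ _ (by linarith : (0:ℝ) ≤ 1-s),
                ENNReal.inv_mul_cancel hB0 hBt, ENNReal.one_rpow, mul_one]

lemma apBasisConst_le (hopen : ∀ B ∈ 𝓑, IsOpen B)
    (hvol : ∀ B ∈ 𝓑, 0 < volume B ∧ volume B < ∞)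
    {p p₀ : ℝ} (hp : 1 < p) (hpp₀ : p < p₀)
    {v : (Fin n → ℝ) → ℝ≥0∞} (hv : Measurable v) (hvpos : ∀ x, 0 < v x)
    {C : ℝ≥0∞} (hC1 : 1 ≤ C) (hCt : C ≠ ∞)
    (hMv : ∀ x, basisMax n 𝓑 v x ≤ C * v x) :
    ApBasisConst n p₀ 𝓑 (fun x => v x ^ (p - p₀)) ≤ C ^ (p₀ - 1) := by
  set r : ℝ := p₀ - p with hr
  have hr0 : 0 < r := by rw [hr]; linarith
  have hp₀1 : (1:ℝ) < p₀ := lt_trans hp hpp₀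
  set s : ℝ := r / (p₀ - 1) with hs
  have hs0 : 0 < s := div_pos hr0 (by linarith)
  have hs1 : s < 1 := by
    rw [hs, div_lt_one (by linarith : (0:ℝ) < p₀ - 1), hr]
    linarith
  have hCr0 : C ^ r ≠ 0 := (ENNReal.rpow_pos (lt_of_lt_of_le zero_lt_one hC1) hCt).ne'
  have hCrt : C ^ r ≠ ∞ := ENNReal.rpow_ne_top_of_nonneg hr0.le hCt
  -- rewrite the dual-exponent function
  have hdual : ∀ y : Fin n → ℝ,
      (v y ^ (p - p₀)) ^ (1 - p₀ / (p₀ - 1)) = v y ^ s := by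
    intro y
    rw [← ENNReal.rpow_mul]
    congr 1
    rw [hs, hr]
    have hne : p₀ - 1 ≠ 0 := by linarith
    field_simp
    ring
  rw [ApBasisConst]
  refine iSup₂_le fun B hB => ?_
  have hB0 : volume B ≠ 0 := (hvol B hB).1.ne'
  have hBt : volume B ≠ ∞ := (hvol B hB).2.ne
  have havg_le : ∀ x ∈ B, setAvg n B v ≤ C * v x := by
    intro x hx
    refine le_trans ?_ (hMv x)
    exact le_iSup_of_le B (le_iSup_of_le hB (le_iSup_of_le hx le_rfl))
  by_cases hI : (∫⁻ y in B, v y) = ∞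
  · -- the weight vanishes on B
    have havg : setAvg n B v = ∞ := by
      rw [setAvg, hI, ENNReal.mul_top (ENNReal.inv_ne_zero.2 hBt)]
    have hvtop : ∀ x ∈ B, v x = ∞ := by
      intro x hx
      by_contra hvx
      have := havg_le x hx
      rw [havg] at this
      exact (ENNReal.mul_lt_top hCt.lt_top (lt_top_iff_ne_top.2 hvx)).ne
        (top_le_iff.1 this)
    have hw0 : (∫⁻ y in B, v y ^ (p - p₀)) = 0 := by
      rw [setLIntegral_congr_fun (hopen B hB).measurableSet
        (fun x hx => by
          rw [hvtop x hx, ENNReal.top_rpow_of_neg (by linarith : p - p₀ < 0)])]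
      simp
    rw [setAvg, hw0, mul_zero, zero_mul]
    exact zero_le
  · set a := setAvg n B v with ha
    have hat : a ≠ ∞ := by
      rw [ha, setAvg]
      exact ENNReal.mul_ne_top (ENNReal.inv_ne_top.2 hB0) hI
    have ha0 : a ≠ 0 := by
      rw [ha, setAvg]
      refine mul_ne_zero (ENNReal.inv_ne_zero.2 hBt) ?_
      intro hI0
      have hae : v =ᵐ[volume.restrict B] 0 := (lintegral_eq_zero_iff hv).1 hI0
      have : volume.restrict B {x | ¬ v x = 0} = 0 := hae
      rw [(by ext x; simp [(hvpos x).ne'] : {x | ¬ v x = 0} = Set.univ),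
        Measure.restrict_apply_univ] at this
      exact hB0 this
    have har0 : a ^ r ≠ 0 := (ENNReal.rpow_pos (pos_iff_ne_zero.2 ha0) hat).ne'
    -- pointwise bound for the weight on B
    have hptwise : ∀ x ∈ B, v x ^ (p - p₀) ≤ C ^ r * a ^ (-r) := by
      intro x hx
      have h1 : a ^ r ≤ C ^ r * v x ^ r := by
        rw [← ENNReal.mul_rpow_of_nonneg _ _ hr0.le]
        exact ENNReal.rpow_le_rpow (havg_le x hx) hr0.le
      have h2 : (C ^ r * v x ^ r)⁻¹ ≤ (a ^ r)⁻¹ := ENNReal.inv_le_inv.2 h1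
      have h3 : (p - p₀) = -r := by rw [hr]; ring
      rw [h3, ENNReal.rpow_neg, ENNReal.rpow_neg]
      calc (v x ^ r)⁻¹ = C ^ r * (C ^ r * v x ^ r)⁻¹ := by
            rw [ENNReal.mul_inv (Or.inl hCr0) (Or.inl hCrt), ← mul_assoc,
              ENNReal.mul_inv_cancel hCr0 hCrt, one_mul]
        _ ≤ C ^ r * (a ^ r)⁻¹ := mul_le_mul_right h2 _
    -- average of the weight
    have havgw : setAvg n B (fun x => v x ^ (p - p₀)) ≤ C ^ r * a ^ (-r) := by
      rw [setAvg]
      have : (∫⁻ y in B, v y ^ (p - p₀)) ≤ (C ^ r * a ^ (-r)) * volume B := by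
        calc (∫⁻ y in B, v y ^ (p - p₀)) ≤ ∫⁻ _y in B, C ^ r * a ^ (-r) := by
              refine lintegral_mono_ae ?_
              rw [ae_restrict_iff' (hopen B hB).measurableSet]
              exact ae_of_all _ hptwise
          _ = (C ^ r * a ^ (-r)) * volume B := by rw [setLIntegral_const]
      calc (volume B)⁻¹ * ∫⁻ y in B, v y ^ (p - p₀)
          ≤ (volume B)⁻¹ * ((C ^ r * a ^ (-r)) * volume B) := mul_le_mul_right this _
        _ = (C ^ r * a ^ (-r)) * ((volume B)⁻¹ * volume B) := by ring
        _ = C ^ r * a ^ (-r) := by rw [ENNReal.inv_mul_cancel hB0 hBt, mul_one]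
    -- Jensen for the dual factor
    have hjensen : (setAvg n B fun y => (v y ^ (p - p₀)) ^ (1 - p₀ / (p₀ - 1))) ^ (p₀ - 1)
        ≤ a ^ r := by
      have h4 : (setAvg n B fun y => v y ^ s) ≤ a ^ s :=
        setAvg_rpow_le hB0 hBt hv hs0 hs1
      simp_rw [hdual]
      calc (setAvg n B fun y => v y ^ s) ^ (p₀ - 1) ≤ (a ^ s) ^ (p₀ - 1) :=
            ENNReal.rpow_le_rpow h4 (by linarith)
        _ = a ^ r := by
            rw [← ENNReal.rpow_mul]
            congr 1
            rw [hs, div_mul_cancel₀ _ (by linarith : p₀ - 1 ≠ 0)]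
    calc setAvg n B (fun x => v x ^ (p - p₀)) *
          (setAvg n B fun y => (v y ^ (p - p₀)) ^ (1 - p₀ / (p₀ - 1))) ^ (p₀ - 1)
        ≤ (C ^ r * a ^ (-r)) * a ^ r := mul_le_mul' havgw hjensen
      _ = C ^ r := by
          rw [mul_assoc, ← ENNReal.rpow_add _ _ ha0 hat]
          norm_num
      _ ≤ C ^ (p₀ - 1) := ENNReal.rpow_le_rpow_of_exponent_le hC1 (by linarith)

end Aux5
section Aux6

variable {n : ℕ}

lemma ennreal_rpow_anti {x y : ℝ≥0∞} (h : x ≤ y) {e : ℝ} (he : e ≤ 0) : y ^ e ≤ x ^ e := by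
  obtain ⟨d, rfl⟩ : ∃ d, e = -d := ⟨-e, by ring⟩
  rw [ENNReal.rpow_neg, ENNReal.rpow_neg]
  exact ENNReal.inv_le_inv.2 (ENNReal.rpow_le_rpow h (by linarith))

lemma isCube_volume_lt_top {Q : Set (Fin n → ℝ)} (hQ : IsCube n Q) : volume Q < ∞ := by
  obtain ⟨a, h, hh, rfl⟩ := hQ
  have hQeq : {y : Fin n → ℝ | ∀ i, y i ∈ Set.Icc (a i) (a i + h)}
      = Set.pi Set.univ (fun i => Set.Icc (a i) (a i + h)) := by
    ext y; simp only [Set.mem_setOf_eq, Set.mem_univ_pi]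
  rw [hQeq, volume_pi_pi]
  refine ENNReal.prod_lt_top fun i _ => ?_
  rw [Real.volume_Icc]
  exact ENNReal.ofReal_lt_top

lemma isWeight_rpow_neg {v : (Fin n → ℝ) → ℝ≥0∞} (hv : Measurable v)
    (hlow : ∀ Q : Set (Fin n → ℝ), IsCube n Q →
      ∃ ε : ℝ≥0∞, 0 < ε ∧ ε < ∞ ∧ ∀ x ∈ Q, ε ≤ v x)
    {e : ℝ} (he : e < 0) : IsWeight n (fun x => v x ^ e) := by
  constructor
  · exact hv.pow_const e
  · intro Q hQ
    obtain ⟨ε, hε0, hεt, hεle⟩ := hlow Q hQ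
    have hεe : ε ^ e < ∞ := by
      obtain ⟨d, rfl⟩ : ∃ d, e = -d := ⟨-e, by ring⟩
      rw [ENNReal.rpow_neg]
      simp only [ENNReal.inv_lt_top]
      exact ENNReal.rpow_pos hε0 hεt.ne
    have hQm : MeasurableSet Q := by
      obtain ⟨a, h, hh, rfl⟩ := hQ
      have : {y : Fin n → ℝ | ∀ i, y i ∈ Set.Icc (a i) (a i + h)}
          = Set.pi Set.univ (fun i => Set.Icc (a i) (a i + h)) := by
        ext y; simp only [Set.mem_setOf_eq, Set.mem_univ_pi]
      rw [this]
      exact MeasurableSet.univ_pi fun i => measurableSet_Icc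
    calc (∫⁻ y in Q, v y ^ e) ≤ ∫⁻ _y in Q, ε ^ e := by
          refine lintegral_mono_ae ?_
          rw [ae_restrict_iff' hQm]
          exact ae_of_all _ fun x hx => ennreal_rpow_anti (hεle x hx) he.le
      _ = ε ^ e * volume Q := setLIntegral_const _ _
      _ < ∞ := ENNReal.mul_lt_top hεe (isCube_volume_lt_top hQ)

end Aux6
section Key

set_option maxHeartbeats 1000000 in
lemma key_bound (n : ℕ) (𝓑 : Set (Set (Fin n → ℝ)))
    (hopen : ∀ B ∈ 𝓑, IsOpen B)
    (hvol : ∀ B ∈ 𝓑, 0 < volume B ∧ volume B < ∞)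
    (p₀ : ℝ) (hp₀ : 1 < p₀) (β : ℝ) (hβ : 0 ≤ β)
    (c : ℝ≥0∞) (hc : c < ∞)
    (hbound : ∀ w : (Fin n → ℝ) → ℝ≥0∞, IsWeight n w → ApBasisConst n p₀ 𝓑 w < ∞ →
      ∀ f : (Fin n → ℝ) → ℝ, Measurable f → wLpNorm n p₀ w f < ∞ →
        wLpNormE n p₀ w (basisMax n 𝓑 fun y => (‖f y‖₊ : ℝ≥0∞)) ≤
          c * ApBasisConst n p₀ 𝓑 w ^ β * wLpNorm n p₀ w f)
    (p : ℝ) (hp : 1 < p) (hpp₀ : p < p₀) (hN : basisMaxOpNorm n 𝓑 p < ∞) :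
    basisMaxOpNorm n 𝓑 p ≤
      2 * c * (2 * (basisMaxOpNorm n 𝓑 p + 1)) ^ (β * (p₀ - 1)) := by
  have hp0 : (0:ℝ) < p := by linarith
  have hp1 : (1:ℝ) ≤ p := hp.le
  set N := basisMaxOpNorm n 𝓑 p with hNdef
  set C : ℝ≥0∞ := 2 * (N + 1) with hCdef
  set θ : ℝ := β * (p₀ - 1) with hθdef
  have hθ0 : 0 ≤ θ := mul_nonneg hβ (by linarith)
  have hC1 : (1:ℝ≥0∞) ≤ C := by
    calc (1:ℝ≥0∞) ≤ 2 * 1 := by norm_num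
      _ ≤ 2 * (N + 1) := mul_le_mul_right (le_add_self) _
  have hC0 : C ≠ 0 := by
    intro h
    exact absurd h (ne_of_gt (lt_of_lt_of_le zero_lt_one hC1))
  have hCt : C ≠ ∞ := by
    rw [hCdef]
    exact ENNReal.mul_ne_top ENNReal.ofNat_ne_top (ENNReal.add_ne_top.2 ⟨hN.ne, ENNReal.one_ne_top⟩)
  have hCθt : C ^ θ ≠ ∞ := ENNReal.rpow_ne_top_of_nonneg hθ0 hCt
  set K : ℝ≥0∞ := 2 * c * C ^ θ with hKdef
  have hKt : K ≠ ∞ :=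
    ENNReal.mul_ne_top (ENNReal.mul_ne_top ENNReal.ofNat_ne_top hc.ne) hCθt
  -- it suffices to show K is in the defining set
  refine sInf_le ?_
  simp only [Set.mem_setOf_eq]
  intro f hfm hfL
  set L := lpNorm n p f with hLdef
  obtain ⟨h₀, hh₀m, hh₀pos, hh₀fin, hh₀lp, hh₀cube⟩ := exists_good_h0 n
  have hnn : Measurable fun x => (‖f x‖₊ : ℝ≥0∞) := hfm.nnnorm.coe_nnreal_ennreal
  -- main estimate with the perturbation δ
  have main : ∀ δ : ℝ≥0∞, 0 < δ → δ < ∞ →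
      lpNormE n p (basisMax n 𝓑 fun y => (‖f y‖₊ : ℝ≥0∞)) ≤ K * L + K * (2 * δ) := by
    intro δ hδ0 hδt
    set g : (Fin n → ℝ) → ℝ≥0∞ := fun x => (‖f x‖₊ : ℝ≥0∞) + δ * h₀ x with hgdef
    have hgm : Measurable g := hnn.add (hh₀m.const_mul δ)
    have hgfin : ∀ x, g x < ∞ := fun x =>
      ENNReal.add_lt_top.2 ⟨ENNReal.coe_lt_top, ENNReal.mul_lt_top hδt (hh₀fin x)⟩
    have hgpos : ∀ x, 0 < g x := fun x =>
      lt_of_lt_of_le (ENNReal.mul_pos hδ0.ne' (hh₀pos x).ne') le_add_self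
    have hgL : lpNormE n p g ≤ L + 2 * δ := by
      calc lpNormE n p g
          ≤ lpNormE n p (fun x => (‖f x‖₊ : ℝ≥0∞)) + lpNormE n p (fun x => δ * h₀ x) :=
            lpNormE_add_le hp1 hnn (hh₀m.const_mul δ)
        _ ≤ L + δ * 2 := by
            refine add_le_add le_rfl ?_
            rw [lpNormE_const_mul hp0 δ hh₀m]
            exact mul_le_mul_right (hh₀lp p hp1) δ
        _ = L + 2 * δ := by rw [mul_comm]
    have hgLfin : lpNormE n p g < ∞ := lt_of_le_of_lt hgL
      (ENNReal.add_lt_top.2 ⟨hfL, ENNReal.mul_lt_top (by norm_num) hδt⟩)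
    -- the Rubio de Francia iteration
    set G : ℕ → (Fin n → ℝ) → ℝ≥0∞ := fun k => (basisMax n 𝓑)^[k] g with hGdef
    have hGsucc : ∀ k, G (k+1) = basisMax n 𝓑 (G k) := fun k =>
      Function.iterate_succ_apply' (basisMax n 𝓑) k g
    have hGm : ∀ k, Measurable (G k) := by
      intro k
      induction k with
      | zero => exact hgm
      | succ k _ => rw [hGsucc k]; exact basisMax_measurable hopen _
    have hGnorm : ∀ k, lpNormE n p (G k) ≤ N ^ k * lpNormE n p g := by
      intro k
      induction k with
      | zero => simp [hGdef]
      | succ k ih =>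
          have hfin : lpNormE n p (G k) < ∞ :=
            lt_of_le_of_lt ih (ENNReal.mul_lt_top (ENNReal.pow_lt_top_iff.2 (Or.inl hN)) hgLfin)
          rw [hGsucc k]
          calc lpNormE n p (basisMax n 𝓑 (G k)) ≤ N * lpNormE n p (G k) :=
                basisMax_lpNormE_le hp1 (hGm k) hfin
            _ ≤ N * (N ^ k * lpNormE n p g) := mul_le_mul_right ih N
            _ = N ^ (k+1) * lpNormE n p g := by rw [pow_succ]; ring
    set V : (Fin n → ℝ) → ℝ≥0∞ := fun x => ∑' k, (C⁻¹) ^ k * G k x with hVdef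
    have hVm : Measurable V := Measurable.ennreal_tsum fun k => (hGm k).const_mul _
    have hinvC : C⁻¹ * N ≤ 2⁻¹ := by
      have h1 : N ≤ C * 2⁻¹ := by
        calc N ≤ N + 1 := le_self_add
          _ = C * 2⁻¹ := by
              rw [hCdef, mul_comm (2:ℝ≥0∞) (N+1), mul_assoc,
                ENNReal.mul_inv_cancel (by norm_num) (by norm_num), mul_one]
      calc C⁻¹ * N ≤ C⁻¹ * (C * 2⁻¹) := mul_le_mul_right h1 _
        _ = (C⁻¹ * C) * 2⁻¹ := by ring
        _ = 2⁻¹ := by rw [ENNReal.inv_mul_cancel hC0 hCt, one_mul]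
    have hVnorm : lpNormE n p V ≤ 2 * lpNormE n p g := by
      calc lpNormE n p V ≤ ∑' k, lpNormE n p (fun x => (C⁻¹) ^ k * G k x) :=
            lpNormE_tsum_le hp1 _ fun k => (hGm k).const_mul _
        _ ≤ ∑' k : ℕ, ((2:ℝ≥0∞) ^ k)⁻¹ * lpNormE n p g := by
            refine ENNReal.tsum_le_tsum fun k => ?_
            rw [lpNormE_const_mul hp0 _ (hGm k)]
            calc (C⁻¹) ^ k * lpNormE n p (G k)
                ≤ (C⁻¹) ^ k * (N ^ k * lpNormE n p g) := mul_le_mul_right (hGnorm k) _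
              _ = (C⁻¹ * N) ^ k * lpNormE n p g := by rw [mul_pow]; ring
              _ ≤ (2⁻¹ : ℝ≥0∞) ^ k * lpNormE n p g :=
                  mul_le_mul_left (pow_le_pow_left' hinvC k) _
              _ = ((2:ℝ≥0∞) ^ k)⁻¹ * lpNormE n p g := by rw [ENNReal.inv_pow]
        _ = 2 * lpNormE n p g := by
            rw [ENNReal.tsum_mul_right, tsum_inv_two_pow]
    have hgV : ∀ x, g x ≤ V x := by
      intro x
      have := ENNReal.le_tsum (f := fun k => (C⁻¹) ^ k * G k x) 0
      simpa [hGdef] using this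
    have hVpos : ∀ x, 0 < V x := fun x => lt_of_lt_of_le (hgpos x) (hgV x)
    have hMV : ∀ x, basisMax n 𝓑 V x ≤ C * V x := by
      intro x
      calc basisMax n 𝓑 V x ≤ ∑' k, basisMax n 𝓑 (fun y => (C⁻¹) ^ k * G k y) x :=
            basisMax_tsum_le _ (fun k => (hGm k).const_mul _) x
        _ = ∑' k, (C⁻¹) ^ k * G (k+1) x := by
            refine tsum_congr fun k => ?_
            rw [basisMax_const_mul _ (hGm k), hGsucc k]
        _ = ∑' k, C * ((C⁻¹) ^ (k+1) * G (k+1) x) := by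
            refine tsum_congr fun k => ?_
            rw [← mul_assoc, pow_succ', ← mul_assoc, ENNReal.mul_inv_cancel hC0 hCt, one_mul]
        _ = C * ∑' k, (C⁻¹) ^ (k+1) * G (k+1) x := ENNReal.tsum_mul_left
        _ ≤ C * V x := by
            refine mul_le_mul_right ?_ C
            rw [hVdef]
            exact ennreal_tsum_shift_le (fun k => (C⁻¹) ^ k * G k x)
    -- the weight
    set w : (Fin n → ℝ) → ℝ≥0∞ := fun x => V x ^ (p - p₀) with hwdef
    have hw : IsWeight n w := by
      refine isWeight_rpow_neg hVm ?_ (by linarith : p - p₀ < 0)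
      intro Q hQ
      obtain ⟨ε, hε0, hεt, hεle⟩ := hh₀cube Q hQ
      refine ⟨δ * ε, ENNReal.mul_pos hδ0.ne' hε0.ne', ENNReal.mul_lt_top hδt hεt, ?_⟩
      intro x hx
      calc δ * ε ≤ δ * h₀ x := mul_le_mul_right (hεle x hx) δ
        _ ≤ g x := le_add_self
        _ ≤ V x := hgV x
    have hAp : ApBasisConst n p₀ 𝓑 w ≤ C ^ (p₀ - 1) :=
      apBasisConst_le hopen hvol hp hpp₀ hVm hVpos hC1 hCt hMV
    have hApfin : ApBasisConst n p₀ 𝓑 w < ∞ :=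
      lt_of_le_of_lt hAp (ENNReal.rpow_lt_top_of_nonneg (by linarith) hCt).lt_top
    -- the test function
    set f' : (Fin n → ℝ) → ℝ := fun x => (g x).toReal with hf'def
    have hf'm : Measurable f' := hgm.ennreal_toReal
    have hfun : (fun y => (‖f' y‖₊ : ℝ≥0∞)) = g := by
      funext y
      rw [hf'def]
      simp only
      rw [← enorm_eq_nnnorm, Real.enorm_eq_ofReal ENNReal.toReal_nonneg, ENNReal.ofReal_toReal (hgfin y).ne]
    set I : ℝ≥0∞ := ∫⁻ x, V x ^ p with hIdef
    have hIfin : I ≠ ∞ := lpNormE_fin_ne_top hp0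
      (lt_of_le_of_lt hVnorm (ENNReal.mul_lt_top (by norm_num) hgLfin))
    have bound1 : (∫⁻ x, g x ^ p₀ * w x) ≤ I := by
      rw [hIdef]
      refine lintegral_mono fun x => ?_
      by_cases hVx : V x = ∞
      · rw [hwdef]
        simp only
        rw [hVx, ENNReal.top_rpow_of_neg (by linarith : p - p₀ < 0), mul_zero]
        exact zero_le
      · have h1 : g x ^ p₀ ≤ V x ^ p₀ := ENNReal.rpow_le_rpow (hgV x) (by linarith)
        calc g x ^ p₀ * w x ≤ V x ^ p₀ * V x ^ (p - p₀) := mul_le_mul_left h1 _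
          _ = V x ^ p := by
              rw [← ENNReal.rpow_add _ _ (hVpos x).ne' hVx]
              norm_num
    have hwLp : wLpNorm n p₀ w f' = (∫⁻ x, g x ^ p₀ * w x) ^ (1/p₀) := by
      rw [wLpNorm, hfun, wLpNormE]
    have hwfin : wLpNorm n p₀ w f' < ∞ := by
      rw [hwLp]
      refine ENNReal.rpow_lt_top_of_nonneg (by positivity) ?_
      exact fun h => hIfin (top_le_iff.1 (h ▸ bound1))
    -- apply the weighted bound
    have hkey := hbound w hw hApfin f' hf'm hwfin
    set Mg : (Fin n → ℝ) → ℝ≥0∞ := basisMax n 𝓑 g with hMgdef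
    have hMgm : Measurable Mg := basisMax_measurable hopen g
    have hLHS : wLpNormE n p₀ w (basisMax n 𝓑 fun y => (‖f' y‖₊ : ℝ≥0∞))
        = (∫⁻ x, Mg x ^ p₀ * w x) ^ (1/p₀) := by
      rw [hfun, wLpNormE]
    set A : ℝ≥0∞ := ∫⁻ x, Mg x ^ p₀ * w x with hAdef
    have hA : A ^ (1/p₀) ≤ c * C ^ θ * I ^ (1/p₀) := by
      rw [hLHS] at hkey
      refine le_trans hkey ?_
      refine mul_le_mul' (mul_le_mul' le_rfl ?_) ?_
      · calc ApBasisConst n p₀ 𝓑 w ^ β ≤ (C ^ (p₀-1)) ^ β :=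
              ENNReal.rpow_le_rpow hAp hβ
          _ = C ^ θ := by
              rw [← ENNReal.rpow_mul, hθdef, mul_comm]
      · rw [hwLp]
        exact ENNReal.rpow_le_rpow bound1 (by positivity)
    -- Hölder's inequality
    have hVlp : lpNormE n p V < ∞ :=
      lt_of_le_of_lt hVnorm (ENNReal.mul_lt_top (by norm_num) hgLfin)
    have hVae : ∀ᵐ x ∂(volume : Measure (Fin n → ℝ)), V x < ∞ :=
      ae_lt_top_of_lpNormE hp0 hVm hVlp
    set e₁ : ℝ := p * (p - p₀) / p₀ with he₁
    set e₂ : ℝ := p * (p₀ - p) / p₀ with he₂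
    set F : (Fin n → ℝ) → ℝ≥0∞ := fun x => Mg x ^ p * V x ^ e₁ with hFdef
    set Gg : (Fin n → ℝ) → ℝ≥0∞ := fun x => V x ^ e₂ with hGgdef
    have hFG : (fun x => Mg x ^ p) =ᵐ[volume] fun x => F x * Gg x := by
      filter_upwards [hVae] with x hx
      have h1 : V x ^ e₁ * V x ^ e₂ = 1 := by
        rw [← ENNReal.rpow_add _ _ (hVpos x).ne' hx.ne]
        have h2 : e₁ + e₂ = 0 := by rw [he₁, he₂]; ring
        rw [h2, ENNReal.rpow_zero]
      calc Mg x ^ p = Mg x ^ p * 1 := (mul_one _).symm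
        _ = Mg x ^ p * (V x ^ e₁ * V x ^ e₂) := by rw [h1]
        _ = (Mg x ^ p * V x ^ e₁) * V x ^ e₂ := by ring
    have hp₀p : (0:ℝ) < p₀ - p := by linarith
    have hPQ : Real.HolderConjugate (p₀/p) (p₀/(p₀-p)) := by
      refine Real.holderConjugate_iff.2 ⟨?_, ?_⟩
      · rw [lt_div_iff₀ hp0]; linarith
      · rw [inv_div, inv_div, ← add_div, div_eq_one_iff_eq (by linarith : p₀ ≠ 0)]
        ring
    have hHold := ENNReal.lintegral_mul_le_Lp_mul_Lq (volume : Measure (Fin n → ℝ)) hPQ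
      ((hMgm.pow_const p).mul (hVm.pow_const e₁)).aemeasurable
      (hVm.pow_const e₂).aemeasurable
    simp only [Pi.mul_apply] at hHold
    have hF : ∀ x, F x ^ (p₀/p) = Mg x ^ p₀ * w x := by
      intro x
      rw [hFdef]
      simp only
      rw [ENNReal.mul_rpow_of_nonneg _ _ (by positivity : (0:ℝ) ≤ p₀/p),
        ← ENNReal.rpow_mul, ← ENNReal.rpow_mul]
      show Mg x ^ (p * (p₀/p)) * V x ^ (e₁ * (p₀/p)) = Mg x ^ p₀ * V x ^ (p - p₀)
      have h1 : p * (p₀/p) = p₀ := by field_simp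
      have h2 : e₁ * (p₀/p) = p - p₀ := by rw [he₁]; field_simp
      rw [h1, h2]
    have hG : ∀ x, Gg x ^ (p₀/(p₀-p)) = V x ^ p := by
      intro x
      rw [hGgdef]
      simp only
      rw [← ENNReal.rpow_mul]
      congr 1
      rw [he₂]
      field_simp
    simp only [show ∀ x, (Mg x ^ p * V x ^ e₁) ^ (p₀/p) = Mg x ^ p₀ * w x from hF,
      show ∀ x, (V x ^ e₂) ^ (p₀/(p₀-p)) = V x ^ p from hG] at hHold
    have hH2 : (∫⁻ x, Mg x ^ p) ≤ A ^ (p/p₀) * I ^ ((p₀-p)/p₀) := by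
      rw [lintegral_congr_ae hFG]
      refine le_trans hHold (le_of_eq ?_)
      rw [one_div_div, one_div_div]
    have hAp' : A ^ (p/p₀) ≤ (c * C^θ)^p * I ^ (p/p₀) := by
      have h1 : A ^ (p/p₀) = (A ^ (1/p₀)) ^ p := by
        rw [← ENNReal.rpow_mul]
        congr 1
        ring
      rw [h1]
      calc (A ^ (1/p₀))^p ≤ (c * C^θ * I^(1/p₀))^p := ENNReal.rpow_le_rpow hA hp0.le
        _ = (c*C^θ)^p * I^(p/p₀) := by
            rw [ENNReal.mul_rpow_of_nonneg _ _ hp0.le, ← ENNReal.rpow_mul]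
            congr 2
            ring
    have hfinal1 : (∫⁻ x, Mg x ^ p) ≤ (c*C^θ)^p * I := by
      calc (∫⁻ x, Mg x ^ p) ≤ A ^ (p/p₀) * I ^ ((p₀-p)/p₀) := hH2
        _ ≤ ((c*C^θ)^p * I^(p/p₀)) * I^((p₀-p)/p₀) := mul_le_mul_left hAp' _
        _ = (c*C^θ)^p * I := by
            rw [mul_assoc, ← ENNReal.rpow_add_of_nonneg _ _ (by positivity)
              (by positivity : (0:ℝ) ≤ (p₀-p)/p₀)]
            have h3 : p/p₀ + (p₀-p)/p₀ = 1 := by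
              rw [← add_div, div_eq_one_iff_eq (by linarith : p₀ ≠ 0)]
              ring
            rw [h3, ENNReal.rpow_one]
    have hMgle : lpNormE n p Mg ≤ (c*C^θ) * (2 * lpNormE n p g) := by
      rw [lpNormE]
      calc (∫⁻ x, Mg x ^ p) ^ (1/p) ≤ ((c*C^θ)^p * I) ^ (1/p) :=
            ENNReal.rpow_le_rpow hfinal1 (by positivity)
        _ = (c*C^θ) * I^(1/p) := by
            rw [ENNReal.mul_rpow_of_nonneg _ _ (by positivity), ← ENNReal.rpow_mul,
              mul_one_div_cancel hp0.ne', ENNReal.rpow_one]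
        _ = (c*C^θ) * lpNormE n p V := by rw [lpNormE, ← hIdef]
        _ ≤ (c*C^θ) * (2 * lpNormE n p g) := mul_le_mul_right hVnorm _
    calc lpNormE n p (basisMax n 𝓑 fun y => (‖f y‖₊:ℝ≥0∞))
        ≤ lpNormE n p Mg :=
          lpNormE_mono hp0.le (basisMax_mono fun x => le_self_add)
      _ ≤ (c*C^θ) * (2 * lpNormE n p g) := hMgle
      _ ≤ (c*C^θ) * (2 * (L + 2*δ)) :=
          mul_le_mul_right (mul_le_mul_right hgL 2) _
      _ = K * L + K * (2*δ) := by rw [hKdef]; ring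
  refine ENNReal.le_of_forall_pos_le_add fun ε hε hKL => ?_
  set δ : ℝ≥0∞ := (ε : ℝ≥0∞) / (2 * K + 1) with hδdef
  have hKK : (2*K+1 : ℝ≥0∞) ≠ ∞ :=
    ENNReal.add_ne_top.2 ⟨ENNReal.mul_ne_top ENNReal.ofNat_ne_top hKt, ENNReal.one_ne_top⟩
  have hδ0 : 0 < δ := ENNReal.div_pos (ENNReal.coe_ne_zero.2 hε.ne') hKK
  have hδt : δ < ∞ := ENNReal.div_lt_top ENNReal.coe_ne_top (by simp)
  refine le_trans (main δ hδ0 hδt) ?_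
  refine add_le_add le_rfl ?_
  calc K * (2 * δ) = (2*K) * δ := by ring
    _ ≤ (2*K+1) * δ := mul_le_mul_left le_self_add δ
    _ = (2*K+1) * ((ε : ℝ≥0∞) / (2*K+1)) := by rw [hδdef]
    _ ≤ (ε : ℝ≥0∞) := ENNReal.mul_div_le
end Key

/-- for a basis `𝓑` of open sets whose maximal operator is bounded on
each unweighted `L^p`, `1 < p < ∞`, and blows up as `p → 1⁺`, any weighted bound
`‖M_𝓑 f‖_{L^{p₀}(w)} ≤ c [w]_{A_{p₀,𝓑}}^β ‖f‖_{L^{p₀}(w)}` forces `β ≥ 1/(p₀−1)`. -/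
theorem statement17 (n : ℕ) (hn : 1 ≤ n) (𝓑 : Set (Set (Fin n → ℝ)))
    (hopen : ∀ B ∈ 𝓑, IsOpen B)
    (hvol : ∀ B ∈ 𝓑, 0 < volume B ∧ volume B < ∞)
    (hbdd : ∀ p : ℝ, 1 < p → basisMaxOpNorm n 𝓑 p < ∞)
    (hblow : limsup (fun p : ℝ => basisMaxOpNorm n 𝓑 p)
      (nhdsWithin 1 (Set.Ioi 1)) = (∞ : ℝ≥0∞))
    (p₀ : ℝ) (hp₀ : 1 < p₀) (β : ℝ) (hβ : 0 ≤ β)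
    (c : ℝ≥0∞) (hc0 : 0 < c) (hc : c < ∞)
    (hbound : ∀ w : (Fin n → ℝ) → ℝ≥0∞, IsWeight n w → ApBasisConst n p₀ 𝓑 w < ∞ →
      ∀ f : (Fin n → ℝ) → ℝ, Measurable f → wLpNorm n p₀ w f < ∞ →
        wLpNormE n p₀ w (basisMax n 𝓑 fun y => (‖f y‖₊ : ℝ≥0∞)) ≤
          c * ApBasisConst n p₀ 𝓑 w ^ β * wLpNorm n p₀ w f) :
    1 / (p₀ - 1) ≤ β := by
  
  by_contra hcon
  push_neg at hcon
  set θ : ℝ := β * (p₀ - 1) with hθdef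
  have hp₀1 : (0:ℝ) < p₀ - 1 := by linarith
  have hθ1 : θ < 1 := by
    calc θ = β * (p₀ - 1) := rfl
      _ < (1/(p₀-1)) * (p₀-1) := mul_lt_mul_of_pos_right hcon hp₀1
      _ = 1 := by field_simp
  have hθ0 : 0 ≤ θ := mul_nonneg hβ hp₀1.le
  have h1θ : (0:ℝ) < 1 - θ := by linarith
  set K₀ : ℝ≥0∞ := 1 + (8*c) ^ (1/(1-θ)) with hK₀def
  have hK₀t : K₀ ≠ ∞ := by
    rw [hK₀def]
    exact ENNReal.add_ne_top.2 ⟨ENNReal.one_ne_top,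
      ENNReal.rpow_ne_top_of_nonneg (div_nonneg zero_le_one h1θ.le)
        (ENNReal.mul_ne_top (by norm_num) hc.ne)⟩
  have hbdd' : ∀ p : ℝ, p ∈ Set.Ioo 1 p₀ → basisMaxOpNorm n 𝓑 p ≤ K₀ := by
    rintro p ⟨hp1, hp2⟩
    have hNfin := hbdd p hp1
    have hkey := key_bound n 𝓑 hopen hvol p₀ (lt_trans hp1 hp2) β hβ c hc hbound p hp1 hp2 hNfin
    set N := basisMaxOpNorm n 𝓑 p with hN
    rcases le_or_gt N 1 with hN1 | hN1
    · exact le_trans hN1 le_self_add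
    · have hNne : N ≠ 0 := (lt_trans zero_lt_one hN1).ne'
      have hNt : N ≠ ∞ := hNfin.ne
      have h8 : N ≤ 8 * c * N ^ θ := by
        refine le_trans hkey ?_
        have hC4 : 2 * (N + 1) ≤ 4 * N := by
          calc 2*(N+1) ≤ 2*(N+N) := mul_le_mul_right (add_le_add le_rfl hN1.le) 2
            _ = 4*N := by ring
        calc 2*c*(2*(N+1))^θ ≤ 2*c*(4*N)^θ :=
              mul_le_mul_right (ENNReal.rpow_le_rpow hC4 hθ0) _
          _ = 2*c*((4:ℝ≥0∞)^θ * N^θ) := by rw [ENNReal.mul_rpow_of_nonneg _ _ hθ0]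
          _ ≤ 2*c*((4:ℝ≥0∞)^(1:ℝ) * N^θ) :=
              mul_le_mul_right (mul_le_mul_left
                (ENNReal.rpow_le_rpow_of_exponent_le (by norm_num) hθ1.le) _) _
          _ = 8*c*N^θ := by rw [ENNReal.rpow_one]; ring
      have hNθ0 : N ^ θ ≠ 0 := (ENNReal.rpow_pos (pos_iff_ne_zero.2 hNne) hNt).ne'
      have hNθt : N ^ θ ≠ ∞ := ENNReal.rpow_ne_top_of_nonneg hθ0 hNt
      have h9 : N ^ (1-θ) ≤ 8 * c := by
        have h10 : N ^ θ * N ^ (1-θ) ≤ N ^ θ * (8*c) := by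
          calc N ^ θ * N ^ (1-θ) = N ^ (θ + (1-θ)) := (ENNReal.rpow_add _ _ hNne hNt).symm
            _ = N := by norm_num
            _ ≤ 8*c*N^θ := h8
            _ = N^θ * (8*c) := by ring
        exact (ENNReal.mul_le_mul_iff_right hNθ0 hNθt).1 h10
      have h11 : N ≤ (8*c) ^ (1/(1-θ)) := by
        have h12 : N = (N ^ (1-θ)) ^ (1/(1-θ)) := by
          rw [← ENNReal.rpow_mul, mul_one_div_cancel h1θ.ne', ENNReal.rpow_one]
        rw [h12]
        exact ENNReal.rpow_le_rpow h9 (div_nonneg zero_le_one h1θ.le)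
      exact le_trans h11 le_add_self
  have hlim : limsup (fun p : ℝ => basisMaxOpNorm n 𝓑 p) (nhdsWithin 1 (Set.Ioi 1)) ≤ K₀ := by
    refine limsup_le_of_le (by isBoundedDefault) ?_
    have hmem : Set.Ioo (1:ℝ) p₀ ∈ nhdsWithin 1 (Set.Ioi 1) :=
      Ioo_mem_nhdsGT_of_mem ⟨le_refl 1, hp₀⟩
    filter_upwards [hmem] with p hp
    exact hbdd' p hp
  rw [hblow] at hlim
  exact hK₀t (top_le_iff.1 hlim)
end
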